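/- arXiv:2603.09797 — 6 statements merged into one kernel-verified Lean document; each statement's English description precedes it below -/
import Mathlib

section
/- For every finite simple graph G, the critical difference equals the critical independence difference: max over all subsets X of V(G) of (|X| - |N(X)|) equals max over all independent subsets X of V(G) of (|X| - |N(X)|). -/
open SimpleGraph

universe u

variable {V : Type u}

/-- `S` is an independent set of `G`. -/
def IsIndep (G : SimpleGraph V) (S : Set V) : Prop :=
  ∀ ⦃u⦄, u ∈ S → ∀ ⦃v⦄, v ∈ S → ¬ G.Adj u v

/-- The neighborhood `N(S)` of a vertex set. -/
def NSet (G : SimpleGraph V) (S : Set V) : Set V := {v | ∃ u ∈ S, G.Adj u v}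

/-- `S` is a maximum independent set of `G`. -/
def IsMaxIndep (G : SimpleGraph V) (S : Set V) : Prop :=
  IsIndep G S ∧ ∀ T : Set V, IsIndep G T → T.ncard ≤ S.ncard

/-- The independence number `α(G)`. -/
noncomputable def indepNum (G : SimpleGraph V) : ℕ :=
  sSup {n | ∃ S : Set V, IsIndep G S ∧ S.ncard = n}

/-- `core(G)`: intersection of all maximum independent sets. -/
def core (G : SimpleGraph V) : Set V := ⋂₀ {S | IsMaxIndep G S}

/-- `corona(G)`: union of all maximum independent sets. -/
def corona (G : SimpleGraph V) : Set V := ⋃₀ {S | IsMaxIndep G S}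

/-- The difference `d_G(S) = |S| - |N(S)|`, as an integer. -/
noncomputable def diffZ (G : SimpleGraph V) (S : Set V) : ℤ :=
  (S.ncard : ℤ) - ((NSet G S).ncard : ℤ)

/-- `S` is a critical independent set: independent and maximizing `|S| - |N(S)|`
among independent sets. -/
def IsCriticalIndep (G : SimpleGraph V) (S : Set V) : Prop :=
  IsIndep G S ∧ ∀ T : Set V, IsIndep G T → diffZ G T ≤ diffZ G S

/-- `ker(G)`: intersection of all critical independent sets. -/
def kerSet (G : SimpleGraph V) : Set V := ⋂₀ {S | IsCriticalIndep G S}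

/-- `M` is a maximum matching of `G`. -/
def IsMaxMatching (G : SimpleGraph V) (M : G.Subgraph) : Prop :=
  M.IsMatching ∧ ∀ M' : G.Subgraph, M'.IsMatching → M'.edgeSet.ncard ≤ M.edgeSet.ncard

/-- The matching number `μ(G)`. -/
noncomputable def matchNum (G : SimpleGraph V) : ℕ :=
  sSup {n | ∃ M : G.Subgraph, M.IsMatching ∧ M.edgeSet.ncard = n}

/-- `D(G)`: vertices missed by some maximum matching. -/
def DSet (G : SimpleGraph V) : Set V :=
  {v | ∃ M : G.Subgraph, IsMaxMatching G M ∧ v ∉ M.verts}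

/-- `C` is the vertex set of an odd cycle of `G`. -/
def IsOddCycle (G : SimpleGraph V) (C : Set V) : Prop :=
  ∃ (u : V) (w : G.Walk u u), w.IsCycle ∧ Odd w.length ∧ ∀ v, v ∈ w.support ↔ v ∈ C

/-- An edge list is `M`-alternating: consecutive edges, exactly one in `M`. -/
def Alternating (G : SimpleGraph V) (M : G.Subgraph) (l : List (Sym2 V)) : Prop :=
  List.Chain' (fun e f => (e ∈ M.edgeSet ↔ f ∉ M.edgeSet)) l

/-- `w` is an `M`-blossom with base `b`: an odd cycle, alternating, whose two
edges at the base are unmatched (so it carries `⌊length/2⌋` matched edges). -/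
structure IsBlossom (G : SimpleGraph V) (M : G.Subgraph) (b : V) (w : G.Walk b b) : Prop where
  cyc : w.IsCycle
  odd : Odd w.length
  alt : Alternating G M w.edges
  first : ∀ e ∈ w.edges.head?, e ∉ M.edgeSet
  last : ∀ e ∈ w.edges.getLast?, e ∉ M.edgeSet

/-- `p` is an `M`-stem from base `b` to root `r`: an even alternating path
starting (if nonempty) with a matched edge, whose root is `M`-unsaturated. -/
structure IsStem (G : SimpleGraph V) (M : G.Subgraph) (b r : V) (p : G.Walk b r) : Prop where
  path : p.IsPath
  even : Even p.length
  alt : Alternating G M p.edges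
  first : ∀ e ∈ p.edges.head?, e ∈ M.edgeSet
  root : r ∉ M.verts

/-- `F` is the vertex set of an `M`-flower of `G` whose blossom has vertex set `C`. -/
def IsFlowerOn (G : SimpleGraph V) (M : G.Subgraph) (C F : Set V) : Prop :=
  ∃ (b r : V) (w : G.Walk b b) (p : G.Walk b r),
    IsBlossom G M b w ∧ IsStem G M b r p ∧
    (∀ v, v ∈ w.support ↔ v ∈ C) ∧
    (∀ v, v ∈ p.support → v ∈ w.support → v = b) ∧
    F = {v | v ∈ w.support ∨ v ∈ p.support}

/-- The reach set `R(C)` of an odd cycle `C`: union of the vertex sets of all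
`M`-flowers with blossom `C`, over all maximum matchings `M`. -/
def reach (G : SimpleGraph V) (C : Set V) : Set V :=
  ⋃₀ {F | ∃ M : G.Subgraph, IsMaxMatching G M ∧ IsFlowerOn G M C F}

/-- `G` is `R`-disjoint: it has an odd cycle, every odd cycle has nonempty reach
set, and reach sets of distinct odd cycles are disjoint. -/
def RDisjoint (G : SimpleGraph V) : Prop :=
  (∃ C : Set V, IsOddCycle G C) ∧
  (∀ C : Set V, IsOddCycle G C → (reach G C).Nonempty) ∧
  (∀ C C' : Set V, IsOddCycle G C → IsOddCycle G C' → C ≠ C' →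
    reach G C ∩ reach G C' = ∅)

/-- `B(G) = V(G) \ ⋃_C R(C)`. -/
def bipartPart (G : SimpleGraph V) : Set V :=
  {v | ∀ C : Set V, IsOddCycle G C → v ∉ reach G C}

/-- `G` is bipartite: its vertex set splits into two independent sets. -/
def IsBipartiteGraph (G : SimpleGraph V) : Prop :=
  ∃ A B : Set V, (∀ v, v ∈ A ∨ v ∈ B) ∧ A ∩ B = ∅ ∧ IsIndep G A ∧ IsIndep G B

/-- `G` is almost bipartite: it has exactly one odd cycle. -/
def AlmostBipartite (G : SimpleGraph V) : Prop := ∃! C : Set V, IsOddCycle G C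

/-- `G` is a König–Egerváry graph: `α(G) + μ(G) = |V(G)|`. -/
def IsKE {W : Type*} (G : SimpleGraph W) : Prop :=
  _root_.indepNum G + matchNum G = Nat.card W

/-- The critical difference `d(G)`. -/
noncomputable def critDiff (G : SimpleGraph V) : ℤ :=
  sSup {d : ℤ | ∃ S : Set V, diffZ G S = d}

/-- The critical independence difference `d_I(G)`. -/
noncomputable def critIndepDiff (G : SimpleGraph V) : ℤ :=
  sSup {d : ℤ | ∃ S : Set V, IsIndep G S ∧ diffZ G S = d}

lemma key_diff {V : Type u} [Fintype V] (G : SimpleGraph V) (X : Set V) :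
    IsIndep G (X \ NSet G X) ∧ diffZ G X ≤ diffZ G (X \ NSet G X) := by
  set N := NSet G X with hN
  have hIndep : IsIndep G (X \ N) := by
    intro u hu v hv hadj
    exact hv.2 ⟨u, hu.1, hadj⟩
  refine ⟨hIndep, ?_⟩
  have hsub : NSet G (X \ N) ⊆ N \ X := by
    rintro w ⟨u, hu, hadj⟩
    refine ⟨⟨u, hu.1, hadj⟩, fun hw => hu.2 ⟨w, hw, hadj.symm⟩⟩
  have h1 : (X \ N).ncard + (X ∩ N).ncard = X.ncard := by
    rw [show X \ N = X \ (X ∩ N) from (Set.diff_self_inter).symm]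
    exact Set.ncard_diff_add_ncard_of_subset Set.inter_subset_left (Set.toFinite X)
  have h2 : (N \ X).ncard + (N ∩ X).ncard = N.ncard := by
    rw [show N \ X = N \ (N ∩ X) from (Set.diff_self_inter).symm]
    exact Set.ncard_diff_add_ncard_of_subset Set.inter_subset_left (Set.toFinite N)
  have h3 : (NSet G (X \ N)).ncard ≤ (N \ X).ncard :=
    Set.ncard_le_ncard hsub (Set.toFinite _)
  have h4 : (X ∩ N).ncard = (N ∩ X).ncard := by rw [Set.inter_comm]
  simp only [diffZ]
  have := (Nat.cast_le (α := ℤ)).2 h3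
  have e1 : ((X \ N).ncard : ℤ) + (X ∩ N).ncard = X.ncard := by exact_mod_cast h1
  have e2 : ((N \ X).ncard : ℤ) + (N ∩ X).ncard = N.ncard := by exact_mod_cast h2
  have e4 : ((X ∩ N).ncard : ℤ) = (N ∩ X).ncard := by exact_mod_cast h4
  linarith

/-- For every finite graph, the critical difference equals the critical
independence difference. -/
theorem stmt_2 {V : Type u} [Fintype V] (G : SimpleGraph V) :
    critDiff G = critIndepDiff G := by
  have hBdd : ∀ S : Set V, diffZ G S ≤ (Fintype.card V : ℤ) := fun S => by
    have h1 : S.ncard ≤ Fintype.card V := by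
      have := Set.ncard_le_ncard (Set.subset_univ S) (Set.toFinite _)
      rwa [Set.ncard_univ, Nat.card_eq_fintype_card] at this
    have : (S.ncard : ℤ) ≤ (Fintype.card V : ℤ) := by exact_mod_cast h1
    have h0 : (0 : ℤ) ≤ ((NSet G S).ncard : ℤ) := by positivity
    simp only [diffZ]; linarith
  have hAbdd : BddAbove {d : ℤ | ∃ S : Set V, diffZ G S = d} :=
    ⟨Fintype.card V, by rintro d ⟨S, rfl⟩; exact hBdd S⟩
  have hBbdd : BddAbove {d : ℤ | ∃ S : Set V, IsIndep G S ∧ diffZ G S = d} :=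
    ⟨Fintype.card V, by rintro d ⟨S, _, rfl⟩; exact hBdd S⟩
  have hAne : {d : ℤ | ∃ S : Set V, diffZ G S = d}.Nonempty := ⟨_, ∅, rfl⟩
  have hBne : {d : ℤ | ∃ S : Set V, IsIndep G S ∧ diffZ G S = d}.Nonempty :=
    ⟨_, ∅, fun u hu => absurd hu (by simp), rfl⟩
  refine le_antisymm ?_ ?_
  · apply csSup_le hAne
    rintro d ⟨S, rfl⟩
    obtain ⟨hI, hle⟩ := key_diff G S
    exact le_trans hle (le_csSup hBbdd ⟨S \ NSet G S, hI, rfl⟩)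
  · exact csSup_le_csSup hAbdd hBne (by rintro d ⟨S, _, rfl⟩; exact ⟨S, rfl⟩)
end

section
/- For every finite simple graph G, ker(G) is contained in core(G), i.e., every vertex lying in all critical independent sets also lies in all maximum independent sets. -/
open SimpleGraph

universe u

variable {V : Type u}

/-- For every finite graph, `ker(G) ⊆ core(G)`. -/
theorem stmt_3 {V : Type u} [Fintype V] (G : SimpleGraph V) :
    kerSet G ⊆ core G := by
  intro v hv
  apply Set.mem_sInter.mpr
  intro S hS
  obtain ⟨hSind, hSmax⟩ := hS
  -- obtain a critical independent set A
  have hne : Nonempty {T : Set V // IsIndep G T} :=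
    ⟨⟨∅, fun u hu => absurd hu (Set.notMem_empty u)⟩⟩
  obtain ⟨⟨A, hAind⟩, hAmax⟩ :=
    Finite.exists_max (fun T : {T : Set V // IsIndep G T} => diffZ G T.1)
  have hAcrit : IsCriticalIndep G A := ⟨hAind, fun T hT => hAmax ⟨T, hT⟩⟩
  set B := A ∩ S with hBdef
  set X := A \ S with hXdef
  set Y := NSet G A ∩ S with hYdef
  have hBind : IsIndep G B := fun u hu w hw => hAind hu.1 hw.1
  -- the swapped set T = (S \ N(A)) ∪ X is independent
  have hTind : IsIndep G ((S \ NSet G A) ∪ X) := by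
    intro u hu w hw hadj
    rcases hu with hu | hu
    · rcases hw with hw | hw
      · exact hSind hu.1 hw.1 hadj
      · exact hu.2 ⟨w, hw.1, hadj.symm⟩
    · rcases hw with hw | hw
      · exact hw.2 ⟨u, hu.1, hadj⟩
      · exact hAind hu.1 hw.1 hadj
  -- cardinality facts
  have hdisj1 : Disjoint (S \ NSet G A) X := by
    rw [Set.disjoint_left]
    intro a ha ha'
    exact ha'.2 ha.1
  have hcard1 : (S \ NSet G A).ncard + X.ncard ≤ S.ncard := by
    calc (S \ NSet G A).ncard + X.ncard
        = ((S \ NSet G A) ∪ X).ncard :=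
          (Set.ncard_union_eq hdisj1 (Set.toFinite _) (Set.toFinite _)).symm
      _ ≤ S.ncard := hSmax _ hTind
  have hScard : (S ∩ NSet G A).ncard + (S \ NSet G A).ncard = S.ncard :=
    Set.ncard_inter_add_ncard_diff_eq_ncard S (NSet G A) (Set.toFinite _)
  have hXY : X.ncard ≤ Y.ncard := by
    have : Y = S ∩ NSet G A := by rw [hYdef, Set.inter_comm]
    rw [this]
    omega
  -- N(B) and Y are disjoint subsets of N(A)
  have hdisj2 : Disjoint (NSet G B) Y := by
    rw [Set.disjoint_left]
    rintro z ⟨b, hb, hadj⟩ hz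
    exact hSind hb.2 hz.2 hadj
  have hsub2 : NSet G B ∪ Y ⊆ NSet G A := by
    rintro z (⟨b, hb, hadj⟩ | hz)
    · exact ⟨b, hb.1, hadj⟩
    · exact hz.1
  have hcard2 : (NSet G B).ncard + Y.ncard ≤ (NSet G A).ncard := by
    calc (NSet G B).ncard + Y.ncard
        = (NSet G B ∪ Y).ncard :=
          (Set.ncard_union_eq hdisj2 (Set.toFinite _) (Set.toFinite _)).symm
      _ ≤ (NSet G A).ncard := Set.ncard_le_ncard hsub2 (Set.toFinite _)
  have hAsplit : B.ncard + X.ncard = A.ncard :=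
    Set.ncard_inter_add_ncard_diff_eq_ncard A S (Set.toFinite _)
  -- B is critical
  have hdiff : diffZ G A ≤ diffZ G B := by
    unfold diffZ
    omega
  have hBcrit : IsCriticalIndep G B :=
    ⟨hBind, fun T hT => le_trans (hAcrit.2 T hT) hdiff⟩
  exact (hv B hBcrit).2
end

section
/- For every finite simple graph G, there exists a critical independent set I of G (possibly empty) such that I is contained in D(G), where D(G) is the set of vertices missed by some maximum matching. -/
open SimpleGraph

universe u

variable {V : Type u}

private lemma edge_decomp {G : SimpleGraph V} {M : G.Subgraph} {e : Sym2 V}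
    (he : e ∈ M.edgeSet) {u : V} (hu : u ∈ e) : ∃ w, e = s(u, w) ∧ M.Adj u w := by
  induction e with
  | _ a b =>
    rw [Subgraph.mem_edgeSet] at he
    rcases Sym2.mem_iff.mp hu with rfl | rfl
    · exact ⟨b, rfl, he⟩
    · exact ⟨a, Sym2.eq_swap, he.symm⟩

private lemma matching_edge_unique {G : SimpleGraph V} {M : G.Subgraph} (hM : M.IsMatching)
    {e1 e2 : Sym2 V} (h1 : e1 ∈ M.edgeSet) (h2 : e2 ∈ M.edgeSet)
    {u : V} (hu1 : u ∈ e1) (hu2 : u ∈ e2) : e1 = e2 := by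
  obtain ⟨w1, rfl, hw1⟩ := edge_decomp h1 hu1
  obtain ⟨w2, rfl, hw2⟩ := edge_decomp h2 hu2
  rw [(hM (M.edge_vert hw1)).unique hw1 hw2]

/-- Auxiliary: given an independent set `I`, a matching `M`, and an injective map `g`
matching `N(I)` into `I \ {v}`, build a matching at least as large as `M` missing `v`. -/
private lemma aux_matching [Fintype V] (G : SimpleGraph V) (I : Set V)
    (hdisj : ∀ x, x ∈ NSet G I → x ∉ I)
    (M : G.Subgraph) (hM : M.IsMatching) (g : V → V)
    (hg1 : ∀ x ∈ NSet G I, G.Adj x (g x)) (hg2 : ∀ x ∈ NSet G I, g x ∈ I)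
    (hginj : ∀ x ∈ NSet G I, ∀ y ∈ NSet G I, g x = g y → x = y)
    (v : V) (hvI : v ∈ I) (hgv : ∀ x ∈ NSet G I, g x ≠ v) :
    ∃ M' : G.Subgraph, M'.IsMatching ∧ M.edgeSet.ncard ≤ M'.edgeSet.ncard ∧ v ∉ M'.verts := by
  classical
  set NI := NSet G I with hNIdef
  set P : Set V := I ∪ NI with hPdef
  refine ⟨{ verts := NI ∪ g '' NI ∪ {x | ∃ y, M.Adj x y ∧ x ∉ P ∧ y ∉ P}
            Adj := fun x y => (x ∈ NI ∧ y = g x) ∨ (y ∈ NI ∧ x = g y) ∨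
              (M.Adj x y ∧ x ∉ P ∧ y ∉ P)
            adj_sub := by
              rintro x y (⟨hx, rfl⟩ | ⟨hy, rfl⟩ | ⟨h, _, _⟩)
              · exact hg1 x hx
              · exact (hg1 y hy).symm
              · exact M.adj_sub h
            edge_vert := by
              rintro x y (⟨hx, rfl⟩ | ⟨hy, rfl⟩ | ⟨h, hx, hy⟩)
              · exact Or.inl (Or.inl hx)
              · exact Or.inl (Or.inr ⟨y, hy, rfl⟩)
              · exact Or.inr ⟨y, h, hx, hy⟩
            symm := by
              constructor
              rintro x y (⟨hx, rfl⟩ | ⟨hy, rfl⟩ | ⟨h, hx, hy⟩)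
              · exact Or.inr (Or.inl ⟨hx, rfl⟩)
              · exact Or.inl ⟨hy, rfl⟩
              · exact Or.inr (Or.inr ⟨h.symm, hy, hx⟩) }, ?_, ?_, ?_⟩
  · -- IsMatching
    rintro x ((hx | hx) | hx)
    · refine ⟨g x, Or.inl ⟨hx, rfl⟩, ?_⟩
      rintro y (⟨_, rfl⟩ | ⟨hy, rfl⟩ | ⟨_, hxP, _⟩)
      · rfl
      · exact (hdisj _ hx (hg2 y hy)).elim
      · exact (hxP (Or.inr hx)).elim
    · obtain ⟨u, hu, rfl⟩ := hx
      refine ⟨u, Or.inr (Or.inl ⟨hu, rfl⟩), ?_⟩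
      rintro y (⟨hgu, rfl⟩ | ⟨hy, heq⟩ | ⟨_, hxP, _⟩)
      · exact (hdisj _ hgu (hg2 u hu)).elim
      · exact (hginj u hu y hy heq).symm
      · exact (hxP (Or.inl (hg2 u hu))).elim
    · obtain ⟨y0, hm0, hxP, hy0P⟩ := hx
      refine ⟨y0, Or.inr (Or.inr ⟨hm0, hxP, hy0P⟩), ?_⟩
      rintro y (⟨hx', _⟩ | ⟨hy, rfl⟩ | ⟨hm, _, _⟩)
      · exact (hxP (Or.inr hx')).elim
      · exact (hxP (Or.inl (hg2 y hy))).elim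
      · exact (hM (M.edge_vert hm)).unique hm hm0
  · -- cardinality
    set E0 : Set (Sym2 V) := (fun u => s(u, g u)) '' NI with hE0def
    set E2 : Set (Sym2 V) := {e ∈ M.edgeSet | ∃ u ∈ e, u ∈ P} with hE2def
    have hedge : Subgraph.edgeSet
        { verts := NI ∪ g '' NI ∪ {x | ∃ y, M.Adj x y ∧ x ∉ P ∧ y ∉ P}
          Adj := fun x y => (x ∈ NI ∧ y = g x) ∨ (y ∈ NI ∧ x = g y) ∨
            (M.Adj x y ∧ x ∉ P ∧ y ∉ P)
          adj_sub := by
            rintro x y (⟨hx, rfl⟩ | ⟨hy, rfl⟩ | ⟨h, _, _⟩)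
            · exact hg1 x hx
            · exact (hg1 y hy).symm
            · exact M.adj_sub h
          edge_vert := by
            rintro x y (⟨hx, rfl⟩ | ⟨hy, rfl⟩ | ⟨h, hx, hy⟩)
            · exact Or.inl (Or.inl hx)
            · exact Or.inl (Or.inr ⟨y, hy, rfl⟩)
            · exact Or.inr ⟨y, h, hx, hy⟩
          symm := by
            constructor
            rintro x y (⟨hx, rfl⟩ | ⟨hy, rfl⟩ | ⟨h, hx, hy⟩)
            · exact Or.inr (Or.inl ⟨hx, rfl⟩)
            · exact Or.inl ⟨hy, rfl⟩
            · exact Or.inr (Or.inr ⟨h.symm, hy, hx⟩) } = E0 ∪ (M.edgeSet \ E2) := by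
      ext e
      induction e with
      | _ x y =>
        rw [Subgraph.mem_edgeSet]
        constructor
        · rintro (⟨hx, rfl⟩ | ⟨hy, rfl⟩ | ⟨hm, hxP, hyP⟩)
          · exact Or.inl ⟨x, hx, rfl⟩
          · exact Or.inl ⟨y, hy, Sym2.eq_swap⟩
          · refine Or.inr ⟨hm, ?_⟩
            rintro ⟨_, u, hue, huP⟩
            rcases Sym2.mem_iff.mp hue with rfl | rfl
            · exact hxP huP
            · exact hyP huP
        · rintro (⟨u, hu, he⟩ | ⟨hm, hne⟩)
          · rcases Sym2.eq_iff.mp he with ⟨rfl, rfl⟩ | ⟨rfl, rfl⟩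
            · exact Or.inl ⟨hu, rfl⟩
            · exact Or.inr (Or.inl ⟨hu, rfl⟩)
          · refine Or.inr (Or.inr ⟨hm, ?_, ?_⟩)
            · intro hP'
              exact hne ⟨hm, x, Sym2.mem_mk_left x y, hP'⟩
            · intro hP'
              exact hne ⟨hm, y, Sym2.mem_mk_right x y, hP'⟩
    rw [hedge]
    have hE0card : E0.ncard = NI.ncard := by
      rw [hE0def]
      apply Set.ncard_image_of_injOn
      intro a ha b hb hab
      rcases Sym2.eq_iff.mp hab with ⟨h1, _⟩ | ⟨h1, h2⟩
      · exact h1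
      · exact absurd (hg2 b hb) (hdisj _ (h1 ▸ ha))
    have hE2sub : E2 ⊆ M.edgeSet := fun e he => he.1
    have hch : ∀ e ∈ E2, ∃ u, u ∈ e ∧ u ∈ NI := by
      rintro e ⟨hm, u, hue, huP⟩
      rcases huP with huI | huNI
      · obtain ⟨w, rfl, hw⟩ := edge_decomp hm hue
        exact ⟨w, Sym2.mem_mk_right u w, ⟨u, huI, M.adj_sub hw⟩⟩
      · exact ⟨u, hue, huNI⟩
    set φ : Sym2 V → V := fun e =>
      if h : ∃ u, u ∈ e ∧ u ∈ NI then h.choose else v with hφdef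
    have hφ : ∀ e ∈ E2, φ e ∈ e ∧ φ e ∈ NI := by
      intro e he
      have h : ∃ u, u ∈ e ∧ u ∈ NI := hch e he
      rw [hφdef]
      simp only [dif_pos h]
      exact h.choose_spec
    have hE2card : E2.ncard ≤ NI.ncard := by
      have hinj : Set.InjOn φ E2 := by
        intro e1 he1 e2 he2 heq
        exact matching_edge_unique hM (hE2sub he1) (hE2sub he2)
          (hφ e1 he1).1 (heq ▸ (hφ e2 he2).1)
      calc E2.ncard = (φ '' E2).ncard := (Set.ncard_image_of_injOn hinj).symm
        _ ≤ NI.ncard := Set.ncard_le_ncard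
            (by rintro x ⟨e, he, rfl⟩; exact (hφ e he).2) (Set.toFinite _)
    have hdisjE : Disjoint E0 (M.edgeSet \ E2) := by
      rw [Set.disjoint_left]
      rintro e ⟨u, hu, rfl⟩ ⟨hmm, hne⟩
      exact hne ⟨hmm, u, Sym2.mem_mk_left _ _, Or.inr hu⟩
    rw [Set.ncard_union_eq hdisjE]
    have hd := Set.ncard_diff hE2sub
    have hle := Set.ncard_le_ncard hE2sub (Set.toFinite _)
    omega
  · -- v ∉ verts
    rintro ((hv | hv) | hv)
    · exact hdisj v hv hvI
    · obtain ⟨u, hu, heq⟩ := hv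
      exact hgv u hu heq
    · obtain ⟨y, _, hvP, _⟩ := hv
      exact hvP (Or.inl hvI)

/-- Every finite graph has a critical independent set contained in `D(G)`. -/
theorem stmt_4 {V : Type u} [Fintype V] (G : SimpleGraph V) :
    ∃ I : Set V, IsCriticalIndep G I ∧ I ⊆ DSet G := by
  classical
  -- Step 1: a critical independent set of minimum cardinality
  have hindep_empty : IsIndep G (∅ : Set V) := by intro u hu; simp at hu
  obtain ⟨S0, hS0, hS0max⟩ := Set.exists_max_image {S : Set V | IsIndep G S} (diffZ G)
    (Set.toFinite _) ⟨∅, hindep_empty⟩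
  have hS0crit : IsCriticalIndep G S0 := ⟨hS0, fun T hT => hS0max T hT⟩
  have hBne : ({n | ∃ S : Set V, IsCriticalIndep G S ∧ S.ncard = n} : Set ℕ).Nonempty :=
    ⟨S0.ncard, S0, hS0crit, rfl⟩
  obtain ⟨I, hIcrit, hIcard⟩ := Nat.sInf_mem hBne
  have hmin : ∀ T : Set V, IsCriticalIndep G T → I.ncard ≤ T.ncard := by
    intro T hT
    rw [hIcard]
    exact Nat.sInf_le ⟨T, hT, rfl⟩
  have hInd : IsIndep G I := hIcrit.1
  have hdisj : ∀ x, x ∈ NSet G I → x ∉ I := by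
    rintro x ⟨u, hu, hadj⟩ hxI
    exact hInd hu hxI hadj
  refine ⟨I, hIcrit, ?_⟩
  intro v hvI
  -- Step 2: Hall condition for matching N(I) into I \ {v}
  set t : ↥(NSet G I) → Finset V :=
    fun u => (Set.toFinite {x | G.Adj u.1 x ∧ x ∈ I ∧ x ≠ v}).toFinset with htdef
  have hall_cond : ∀ s : Finset ↥(NSet G I), s.card ≤ (s.biUnion t).card := by
    intro s
    by_contra hcon
    push_neg at hcon
    set A : Set V := Subtype.val '' (↑s : Set ↥(NSet G I)) with hAdef
    have hAsub : A ⊆ NSet G I := by rintro x ⟨a, _, rfl⟩; exact a.2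
    have hAcard : A.ncard = s.card := by
      rw [hAdef, Set.ncard_image_of_injOn Subtype.val_injective.injOn, Set.ncard_coe_finset]
    have hbiU : ((s.biUnion t : Finset V) : Set V) = NSet G A ∩ (I \ {v}) := by
      ext x
      simp only [Finset.coe_biUnion, Set.mem_iUnion, Finset.mem_coe,
        Set.Finite.mem_toFinset, htdef]
      constructor
      · rintro ⟨a, ha, hadj, hxI, hxv⟩
        exact ⟨⟨a, ⟨a, ha, rfl⟩, hadj⟩, hxI, hxv⟩
      · rintro ⟨⟨u, ⟨a, ha, rfl⟩, hadj⟩, hxI, hxv⟩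
        exact ⟨a, ha, hadj, hxI, hxv⟩
    have hbiUcard : (s.biUnion t).card = (NSet G A ∩ (I \ {v})).ncard := by
      rw [← hbiU, Set.ncard_coe_finset]
    set T : Set V := I \ NSet G A with hTdef
    have hTind : IsIndep G T := fun u hu w hw => hInd hu.1 hw.1
    have hTsub : T ⊆ I := Set.diff_subset
    have hNT : NSet G T ⊆ NSet G I \ A := by
      rintro x ⟨u, hu, hadj⟩
      refine ⟨⟨u, hu.1, hadj⟩, ?_⟩
      intro hxA
      exact hu.2 ⟨x, hxA, hadj.symm⟩
    have e1 : T.ncard + (NSet G A ∩ I).ncard = I.ncard := by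
      have h1 : NSet G A ∩ I ⊆ I := Set.inter_subset_right
      have h2 : I \ (NSet G A ∩ I) = T := by
        rw [hTdef, Set.diff_inter_self_eq_diff]
      have h3 := Set.ncard_diff h1
      have h4 := Set.ncard_le_ncard h1 (Set.toFinite _)
      rw [h2] at h3
      omega
    have e2 : (NSet G T).ncard + A.ncard ≤ (NSet G I).ncard := by
      have h1 : (NSet G T).ncard ≤ (NSet G I \ A).ncard :=
        Set.ncard_le_ncard hNT (Set.toFinite _)
      have h2 := Set.ncard_diff hAsub
      have h3 := Set.ncard_le_ncard hAsub (Set.toFinite _)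
      omega
    by_cases hvNA : v ∈ NSet G A
    · have hsubins : NSet G A ∩ I ⊆ insert v (NSet G A ∩ (I \ {v})) := by
        rintro x ⟨hx1, hx2⟩
        by_cases hxv : x = v
        · exact Set.mem_insert_iff.mpr (Or.inl hxv)
        · exact Set.mem_insert_iff.mpr (Or.inr ⟨hx1, hx2, hxv⟩)
      have h4 : (NSet G A ∩ I).ncard ≤ (NSet G A ∩ (I \ {v})).ncard + 1 :=
        le_trans (Set.ncard_le_ncard hsubins (Set.toFinite _)) (Set.ncard_insert_le _ _)
      have h5 : (NSet G A ∩ I).ncard ≤ A.ncard := by omega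
      have hdTI : diffZ G I ≤ diffZ G T := by
        unfold diffZ
        omega
      have hcrit : IsCriticalIndep G T :=
        ⟨hTind, fun T' hT' => le_trans (hIcrit.2 T' hT') hdTI⟩
      have hge := hmin T hcrit
      have hvT : v ∉ T := fun h => h.2 hvNA
      have hlt : T.ncard < I.ncard :=
        Set.ncard_lt_ncard ((Set.ssubset_iff_of_subset hTsub).2 ⟨v, hvI, hvT⟩)
          (Set.toFinite _)
      omega
    · have h4 : NSet G A ∩ I = NSet G A ∩ (I \ {v}) := by
        ext x
        constructor
        · rintro ⟨h1, h2⟩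
          exact ⟨h1, h2, fun hx => hvNA (hx ▸ h1)⟩
        · rintro ⟨h1, h2, _⟩
          exact ⟨h1, h2⟩
      have h5 : (NSet G A ∩ I).ncard < A.ncard := by rw [h4]; omega
      have hle := hIcrit.2 T hTind
      unfold diffZ at hle
      omega
  -- Step 3: Hall's theorem gives the partial matching
  obtain ⟨f, hfinj, hft⟩ :=
    (Finset.all_card_le_biUnion_card_iff_existsInjective' t).mp hall_cond
  set g : V → V := fun x => if h : x ∈ NSet G I then f ⟨x, h⟩ else x with hgdef
  have hg : ∀ x (h : x ∈ NSet G I), G.Adj x (g x) ∧ g x ∈ I ∧ g x ≠ v := by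
    intro x h
    have h2 := hft ⟨x, h⟩
    rw [Set.Finite.mem_toFinset] at h2
    simpa [hgdef, dif_pos h] using h2
  have hginj : ∀ x ∈ NSet G I, ∀ y ∈ NSet G I, g x = g y → x = y := by
    intro x hx y hy hxy
    simp only [hgdef, dif_pos hx, dif_pos hy] at hxy
    exact congrArg Subtype.val (hfinj hxy)
  -- Step 4: a maximum matching
  have hfinSub : Finite G.Subgraph := by
    apply Finite.of_injective (fun M : G.Subgraph => (M.verts, M.Adj))
    intro M1 M2 h
    rw [Prod.mk.injEq] at h
    exact Subgraph.ext h.1 h.2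
  have hbot : (⊥ : G.Subgraph).IsMatching := by
    intro x hx
    simp [Subgraph.verts] at hx
  obtain ⟨M, hMm, hMmax⟩ := Set.exists_max_image {M : G.Subgraph | M.IsMatching}
    (fun M => M.edgeSet.ncard) (Set.toFinite _) ⟨⊥, hbot⟩
  obtain ⟨M', hM'm, hM'card, hvM'⟩ := aux_matching G I hdisj M hMm g
    (fun x hx => (hg x hx).1) (fun x hx => (hg x hx).2.1) hginj v hvI
    (fun x hx => (hg x hx).2.2)
  exact ⟨M', ⟨hM'm, fun M'' hM'' => le_trans (hMmax M'' hM'') hM'card⟩, hvM'⟩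
end

section
/- If G is a finite simple graph in which every two distinct odd cycles are vertex-disjoint, then every connected component of the induced subgraph G[D(G)] is either a single vertex or an odd cycle, where D(G) is the set of vertices missed by some maximum matching. -/
open SimpleGraph

universe u

variable {V : Type u}

section M1
open SimpleGraph
variable {V : Type u}

namespace OCD
variable (G : SimpleGraph V)

/-- matching as a set of pairwise disjoint edges -/
def PM (s : Set (Sym2 V)) : Prop :=
  s ⊆ G.edgeSet ∧ ∀ e ∈ s, ∀ f ∈ s, ∀ x : V, x ∈ e → x ∈ f → e = f

def cov (s : Set (Sym2 V)) (x : V) : Prop := ∃ e ∈ s, x ∈ e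

def MaxPM (s : Set (Sym2 V)) : Prop :=
  PM G s ∧ ∀ t : Set (Sym2 V), PM G t → t.ncard ≤ s.ncard

variable {G}

lemma PM.sub {s} (h : PM G s) : s ⊆ G.edgeSet := h.1

/-- build a subgraph from a pairwise disjoint edge set -/
def mOf (s : Set (Sym2 V)) (hs : PM G s) : G.Subgraph where
  verts := {v | cov s v}
  Adj a b := s(a, b) ∈ s
  adj_sub h := hs.1 h
  edge_vert h := ⟨_, h, Sym2.mem_mk_left _ _⟩
  symm := ⟨fun a b h => by rwa [Sym2.eq_swap]⟩

lemma mOf_edgeSet (s : Set (Sym2 V)) (hs : PM G s) : (mOf s hs).edgeSet = s := by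
  ext e
  refine e.ind (fun a b => ?_)
  exact Subgraph.mem_edgeSet

lemma mOf_verts (s : Set (Sym2 V)) (hs : PM G s) {v : V} :
    v ∈ (mOf s hs).verts ↔ cov s v := Iff.rfl

lemma mOf_isMatching (s : Set (Sym2 V)) (hs : PM G s) : (mOf s hs).IsMatching := by
  rintro v ⟨e, he, hv⟩
  obtain ⟨y, rfl⟩ := Sym2.mem_iff_exists.mp hv
  refine ⟨y, he, fun z hz => ?_⟩
  have := hs.2 _ hz _ he v (Sym2.mem_mk_left _ _) (Sym2.mem_mk_left _ _)
  have h2 : z ∈ s(v, y) := this ▸ Sym2.mem_mk_right _ z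
  rcases Sym2.mem_iff.mp h2 with h | h
  · exfalso; rw [h] at hz; exact G.loopless.irrefl v (hs.1 hz)
  · exact h

lemma isMatching_PM {M : G.Subgraph} (hM : M.IsMatching) : PM G M.edgeSet := by
  refine ⟨M.edgeSet_subset, ?_⟩
  intro e he f hf x hxe hxf
  obtain ⟨y, rfl⟩ := Sym2.mem_iff_exists.mp hxe
  obtain ⟨z, rfl⟩ := Sym2.mem_iff_exists.mp hxf
  rw [Subgraph.mem_edgeSet] at he hf
  obtain ⟨w, _, hw⟩ := hM (M.edge_vert he)
  rw [hw _ he, hw _ hf]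

lemma isMatching_cov {M : G.Subgraph} (hM : M.IsMatching) {v : V} :
    v ∈ M.verts ↔ cov M.edgeSet v := by
  constructor
  · intro hv
    obtain ⟨w, hw, -⟩ := hM hv
    exact ⟨s(v, w), Subgraph.mem_edgeSet.mpr hw, Sym2.mem_mk_left _ _⟩
  · rintro ⟨e, he, hv⟩
    obtain ⟨y, rfl⟩ := Sym2.mem_iff_exists.mp hv
    exact M.edge_vert (Subgraph.mem_edgeSet.mp he)

lemma maxMatching_maxPM {M : G.Subgraph} (hM : IsMaxMatching G M) : MaxPM G M.edgeSet := by
  refine ⟨isMatching_PM hM.1, fun t ht => ?_⟩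
  have := hM.2 (mOf t ht) (mOf_isMatching t ht)
  rwa [mOf_edgeSet] at this

lemma mem_DSet_iff {v : V} : v ∈ DSet G ↔ ∃ s, MaxPM G s ∧ ¬ cov s v := by
  constructor
  · rintro ⟨M, hM, hv⟩
    exact ⟨M.edgeSet, maxMatching_maxPM hM, fun hc => hv ((isMatching_cov hM.1).mpr hc)⟩
  · rintro ⟨s, ⟨hs, hmax⟩, hv⟩
    refine ⟨mOf s hs, ⟨mOf_isMatching s hs, fun M' hM' => ?_⟩, hv⟩
    rw [mOf_edgeSet]
    exact hmax _ (isMatching_PM hM')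

end OCD

end M1

section M2
open SimpleGraph
variable {V : Type u}

namespace OCD
variable {G : SimpleGraph V}

/-- alternating pattern w.r.t. one edge set: `b` tells whether head should be in `s` -/
def altP (s : Set (Sym2 V)) : Bool → List (Sym2 V) → Prop
  | _, [] => True
  | b, e :: l => (e ∈ s ↔ b = true) ∧ altP s (!b) l

/-- two-sided alternating pattern -/
def alt2 (s s' : Set (Sym2 V)) : Bool → List (Sym2 V) → Prop
  | _, [] => True
  | b, e :: l => e ∈ (if b then s \ s' else s' \ s) ∧ alt2 s s' (!b) l

lemma altP_append {s : Set (Sym2 V)} :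
    ∀ (l1 l2 : List (Sym2 V)) (b : Bool),
      altP s b (l1 ++ l2) ↔ altP s b l1 ∧ altP s (if Even l1.length then b else !b) l2 := by
  intro l1
  induction l1 with
  | nil => intro l2 b; simp [altP]
  | cons e l ih =>
    intro l2 b
    by_cases h : Even l.length <;>
      simp [altP, ih l2 (!b), h, List.length_cons, Nat.even_add_one, and_assoc]

lemma alt2_append {s s' : Set (Sym2 V)} :
    ∀ (l1 l2 : List (Sym2 V)) (b : Bool),
      alt2 s s' b (l1 ++ l2) ↔ alt2 s s' b l1 ∧ alt2 s s' (if Even l1.length then b else !b) l2 := by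
  intro l1
  induction l1 with
  | nil => intro l2 b; simp [alt2]
  | cons e l ih =>
    intro l2 b
    by_cases h : Even l.length <;>
      simp [alt2, ih l2 (!b), h, List.length_cons, Nat.even_add_one, and_assoc]

lemma altP_reverse {s : Set (Sym2 V)} :
    ∀ (l : List (Sym2 V)) (b : Bool), altP s b l →
      altP s (if Even l.length then !b else b) l.reverse := by
  intro l
  induction l with
  | nil => intro b _; simp [altP]
  | cons e l ih =>
    intro b h
    obtain ⟨h1, h2⟩ := h
    have hrev := ih (!b) h2
    rw [List.reverse_cons, altP_append]
    rcases Nat.even_or_odd l.length with hl | hl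
    · simp_all [List.length_cons, Nat.even_add_one, altP]
    · have hne : ¬ Even l.length := Nat.not_even_iff_odd.mpr hl
      rw [if_neg hne] at hrev
      rw [List.length_cons, List.length_reverse,
        if_pos (by simp [Nat.even_add_one, hne]), if_neg hne]
      exact ⟨hrev, by simp [altP, h1]⟩

lemma alt2_altP {s s' : Set (Sym2 V)} :
    ∀ (l : List (Sym2 V)) (b : Bool), alt2 s s' b l → altP s b l ∧ altP s' (!b) l := by
  intro l
  induction l with
  | nil => intro b _; exact ⟨trivial, trivial⟩
  | cons e l ih =>
    rintro b ⟨h1, h2⟩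
    obtain ⟨ih1, ih2⟩ := ih (!b) h2
    cases b <;> simp_all [altP, alt2]

lemma alt2_swap {s s' : Set (Sym2 V)} :
    ∀ (l : List (Sym2 V)) (b : Bool), alt2 s s' b l → alt2 s' s (!b) l := by
  intro l
  induction l with
  | nil => intro b _; trivial
  | cons e l ih =>
    rintro b ⟨h1, h2⟩
    have := ih (!b) h2
    cases b <;> simp_all [alt2]

lemma altP_congr {s t : Set (Sym2 V)} :
    ∀ (l : List (Sym2 V)) (b : Bool), (∀ e ∈ l, (e ∈ s ↔ e ∈ t)) → altP s b l → altP t b l := by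
  intro l
  induction l with
  | nil => intro b _ _; trivial
  | cons e l ih =>
    rintro b hc ⟨h1, h2⟩
    exact ⟨(hc e (List.mem_cons_self)).symm.trans h1,
      ih (!b) (fun f hf => hc f (List.mem_cons_of_mem _ hf)) h2⟩

/-- first edge of a walk contains the start -/
lemma start_mem_head {u z : V} (w : G.Walk u z) (hne : w.edges ≠ []) :
    ∃ e, w.edges.head? = some e ∧ u ∈ e := by
  cases w with
  | nil => simp at hne
  | cons h p => exact ⟨_, rfl, Sym2.mem_mk_left _ _⟩

/-- last edge of a walk contains the end -/
lemma end_mem_getLast {u z : V} (w : G.Walk u z) (hne : w.edges ≠ []) :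
    ∃ e, w.edges.getLast? = some e ∧ z ∈ e := by
  obtain ⟨e, he, hz⟩ := start_mem_head w.reverse (by simpa [Walk.edges_reverse] using hne)
  rw [Walk.edges_reverse, List.head?_reverse] at he
  exact ⟨e, he, hz⟩

/-- in a path, an edge containing the start is the first edge -/
lemma edge_eq_head {u z : V} (w : G.Walk u z) (hw : w.IsPath) {e : Sym2 V}
    (he : e ∈ w.edges) (hu : u ∈ e) : w.edges.head? = some e := by
  induction w with
  | nil => simp at he
  | cons h p ih =>
    rw [Walk.edges_cons] at he
    rcases List.mem_cons.mp he with rfl | hmem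
    · rfl
    · exfalso
      obtain ⟨y, rfl⟩ := Sym2.mem_iff_exists.mp hu
      exact ((Walk.cons_isPath_iff _ _).mp hw).2 (p.fst_mem_support_of_mem_edges hmem)

/-- in a path, an edge containing the end is the last edge -/
lemma edge_eq_getLast {u z : V} (w : G.Walk u z) (hw : w.IsPath) {e : Sym2 V}
    (he : e ∈ w.edges) (hz : z ∈ e) : w.edges.getLast? = some e := by
  have := edge_eq_head w.reverse (hw.reverse) (by simpa [Walk.edges_reverse] using he) hz
  rwa [Walk.edges_reverse, List.head?_reverse] at this

/-- every vertex of an alternating path other than the end (and other than the start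
when the pattern starts with the `s'` side) is covered by an `s`-edge of the path -/
lemma INC {s s' : Set (Sym2 V)} :
    ∀ {u z : V} (w : G.Walk u z) (b : Bool), w.IsPath → alt2 s s' b w.edges →
      ∀ x ∈ w.support, x ≠ z → (x = u → b = true) →
      ∃ g ∈ w.edges, g ∈ s ∧ x ∈ g := by
  intro u z w
  induction w with
  | nil =>
    intro b _ _ x hx hxz _
    simp only [Walk.support_nil, List.mem_singleton] at hx
    exact absurd hx hxz
  | cons h p ih =>
    rename_i a c d
    intro b hp halt x hx hxz hprov
    rw [Walk.edges_cons] at halt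
    obtain ⟨h1, h2⟩ := halt
    rcases List.mem_cons.mp (by simpa [Walk.support_cons] using hx) with hxa | hxp
    · have hb := hprov hxa
      subst hb hxa
      simp only [if_pos rfl] at h1
      exact ⟨s(x, c), List.mem_cons_self, h1.1, Sym2.mem_mk_left _ _⟩
    · by_cases hxc : x = c
      · cases b with
        | true =>
          simp only [if_pos rfl] at h1
          exact ⟨s(a, c), List.mem_cons_self, h1.1, hxc ▸ Sym2.mem_mk_right _ _⟩
        | false =>
          obtain ⟨g, hg, hgs, hxg⟩ :=
            ih (!false) ((Walk.cons_isPath_iff _ _).mp hp).1 h2 x hxp hxz (fun _ => rfl)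
          exact ⟨g, List.mem_cons_of_mem _ hg, hgs, hxg⟩
      · obtain ⟨g, hg, hgs, hxg⟩ :=
          ih (!b) ((Walk.cons_isPath_iff _ _).mp hp).1 h2 x hxp hxz (fun h' => absurd h' hxc)
        exact ⟨g, List.mem_cons_of_mem _ hg, hgs, hxg⟩

end OCD
end M2

section M3
open SimpleGraph
variable {V : Type u}

namespace OCD
variable {G : SimpleGraph V}

lemma PM_insert {s : Set (Sym2 V)} [Fintype V] (hs : PM G s) {a b : V} (hab : G.Adj a b)
    (ha : ¬ cov s a) (hb : ¬ cov s b) :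
    PM G (insert s(a, b) s) ∧ (insert s(a, b) s).ncard = s.ncard + 1 := by
  have hnm : s(a, b) ∉ s := fun h => ha ⟨_, h, Sym2.mem_mk_left _ _⟩
  refine ⟨⟨?_, ?_⟩, Set.ncard_insert_of_notMem hnm⟩
  · rintro e (rfl | he)
    · exact hab
    · exact hs.1 he
  · rintro e (rfl | he) f (rfl | hf) x hxe hxf
    · rfl
    · exfalso
      rcases Sym2.mem_iff.mp hxe with rfl | rfl
      · exact ha ⟨f, hf, hxf⟩
      · exact hb ⟨f, hf, hxf⟩
    · exfalso
      rcases Sym2.mem_iff.mp hxf with rfl | rfl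
      · exact ha ⟨e, he, hxe⟩
      · exact hb ⟨e, he, hxe⟩
    · exact hs.2 e he f hf x hxe hxf

/-- Key step data for peeling two edges off an alternating path. -/
lemma peel [Fintype V] {s : Set (Sym2 V)} (hs : PM G s) {a c d b : V}
    (h1 : G.Adj a c) (h2 : G.Adj c d) (w2 : G.Walk d b)
    (hp : (Walk.cons h1 (Walk.cons h2 w2)).IsPath)
    (hcov : ¬ cov s a)
    (halt : altP s false (Walk.cons h1 (Walk.cons h2 w2)).edges) :
    ∃ s1 : Set (Sym2 V), PM G s1 ∧ s1.ncard = s.ncard ∧ ¬ cov s1 d ∧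
      altP s1 false w2.edges ∧
      (∀ x, x ∈ w2.support → ¬ cov s x → ¬ cov s1 x) := by
  rw [Walk.edges_cons, Walk.edges_cons] at halt
  obtain ⟨he1r, he2r, halt2x⟩ := halt
  have he1 : s(a, c) ∉ s := fun h => by simpa using he1r.mp h
  have he2 : s(c, d) ∈ s := he2r.mpr (by simp)
  have halt2 : altP s false w2.edges := halt2x
  have hnodup := hp.1.edges_nodup
  rw [Walk.edges_cons, Walk.edges_cons] at hnodup
  simp only [List.nodup_cons, List.mem_cons] at hnodup
  have hane : a ∉ (Walk.cons h2 w2).support := ((Walk.cons_isPath_iff _ _).mp hp).2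
  rw [Walk.support_cons] at hane
  have hac : a ≠ c := fun h => hane (h ▸ List.mem_cons_self)
  have haw2 : a ∉ w2.support := fun h => hane (List.mem_cons_of_mem _ h)
  have hcw2 : c ∉ w2.support :=
    ((Walk.cons_isPath_iff _ _).mp ((Walk.cons_isPath_iff _ _).mp hp).1).2
  have hdin : d ∈ w2.support := w2.start_mem_support
  have hda : d ≠ a := fun h => haw2 (h ▸ hdin)
  have hdc : d ≠ c := fun h => hcw2 (h ▸ hdin)
  set e1 : Sym2 V := s(a, c) with he1def
  set e2 : Sym2 V := s(c, d) with he2def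
  have he12 : e1 ≠ e2 := fun h => hnodup.1 (Or.inl h)
  refine ⟨insert e1 (s \ {e2}), ⟨?_, ?_⟩, ?_, ?_, ?_, ?_⟩
  · rintro e (rfl | he)
    · exact h1
    · exact hs.1 he.1
  · rintro e (rfl | he) f (rfl | hf) x hxe hxf
    · rfl
    · exfalso
      rcases Sym2.mem_iff.mp hxe with rfl | rfl
      · exact hcov ⟨f, hf.1, hxf⟩
      · exact hf.2 (hs.2 f hf.1 e2 he2 x hxf (Sym2.mem_mk_left _ _))
    · exfalso
      rcases Sym2.mem_iff.mp hxf with rfl | rfl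
      · exact hcov ⟨e, he.1, hxe⟩
      · exact he.2 (hs.2 e he.1 e2 he2 x hxe (Sym2.mem_mk_left _ _))
    · exact hs.2 e he.1 f hf.1 x hxe hxf
  · have h1' : e1 ∉ s \ {e2} := fun h => he1 h.1
    rw [Set.ncard_insert_of_notMem h1', Set.ncard_diff_singleton_add_one he2]
  · rintro ⟨e, (rfl | he), hde⟩
    · rcases Sym2.mem_iff.mp hde with rfl | rfl
      · exact hda rfl
      · exact hdc rfl
    · exact he.2 (hs.2 e he.1 e2 he2 d hde (Sym2.mem_mk_right _ _))
  · refine altP_congr _ _ (fun e he => ?_) halt2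
    have hne1 : e ≠ e1 := fun h => hnodup.1 (Or.inr (h ▸ he))
    have hne2 : e ≠ e2 := fun h => hnodup.2.1 (h ▸ he)
    simp [Set.mem_insert_iff, hne1, hne2, Set.mem_diff]
  · intro x hx hcx
    rintro ⟨e, (rfl | he), hxe⟩
    · rcases Sym2.mem_iff.mp hxe with rfl | rfl
      · exact haw2 hx
      · exact hcw2 hx
    · exact hcx ⟨e, he.1, hxe⟩

lemma TOG [Fintype V] :
    ∀ (n : ℕ) {a b : V} (w : G.Walk a b) (s : Set (Sym2 V)), PM G s → w.length = 2 * n →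
      w.IsPath → ¬ cov s a → altP s false w.edges →
      ∃ t, PM G t ∧ t.ncard = s.ncard ∧ ¬ cov t b := by
  intro n
  induction n with
  | zero =>
    intro a b w s hs hlen _ hcov _
    cases w with
    | nil => exact ⟨s, hs, rfl, hcov⟩
    | cons h p => simp at hlen
  | succ n ih =>
    intro a b w s hs hlen hp hcov halt
    cases w with
    | nil => simp at hlen
    | cons h1 w1 =>
      cases w1 with
      | nil => simp only [Walk.length_cons, Walk.length_nil] at hlen; omega
      | cons h2 w2 =>
        obtain ⟨s1, hs1, hcard1, hcovd, halt2, _⟩ := peel hs h1 h2 w2 hp hcov halt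
        have hlen2 : w2.length = 2 * n := by
          simp only [Walk.length_cons] at hlen; omega
        have hp2 : w2.IsPath :=
          ((Walk.cons_isPath_iff _ _).mp ((Walk.cons_isPath_iff _ _).mp hp).1).1
        obtain ⟨t, ht, hc, hcb⟩ := ih w2 s1 hs1 hlen2 hp2 hcovd halt2
        exact ⟨t, ht, hc.trans hcard1, hcb⟩

lemma AUG [Fintype V] :
    ∀ (n : ℕ) {a b : V} (w : G.Walk a b) (s : Set (Sym2 V)), PM G s → w.length = 2 * n + 1 →
      w.IsPath → ¬ cov s a → ¬ cov s b → altP s false w.edges →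
      ∃ t, PM G t ∧ t.ncard = s.ncard + 1 := by
  intro n
  induction n with
  | zero =>
    intro a b w s hs hlen hp hcova hcovb halt
    cases w with
    | nil => simp at hlen
    | cons h1 w1 =>
      cases w1 with
      | nil =>
        rw [Walk.edges_cons, Walk.edges_nil] at halt
        exact ⟨_, (PM_insert hs h1 hcova hcovb).1, (PM_insert hs h1 hcova hcovb).2⟩
      | cons h2 w2 => simp at hlen
  | succ n ih =>
    intro a b w s hs hlen hp hcova hcovb halt
    cases w with
    | nil => simp at hlen
    | cons h1 w1 =>
      cases w1 with
      | nil => simp only [Walk.length_cons, Walk.length_nil] at hlen; omega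
      | cons h2 w2 =>
        obtain ⟨s1, hs1, hcard1, hcovd, halt2, hpres⟩ := peel hs h1 h2 w2 hp hcova halt
        have hlen2 : w2.length = 2 * n + 1 := by
          simp only [Walk.length_cons] at hlen; omega
        have hp2 : w2.IsPath :=
          ((Walk.cons_isPath_iff _ _).mp ((Walk.cons_isPath_iff _ _).mp hp).1).1
        have hcovb1 : ¬ cov s1 b := hpres b w2.end_mem_support hcovb
        obtain ⟨t, ht, hc⟩ := ih w2 s1 hs1 hlen2 hp2 hcovd hcovb1 halt2
        exact ⟨t, ht, by omega⟩

end OCD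
end M3

section M4
open SimpleGraph
variable {V : Type u}

namespace OCD
variable {G : SimpleGraph V} [Fintype V]

/-- the class of the last edge of an alternating walk -/
lemma last_edge_class {s s' : Set (Sym2 V)} {u z : V} (w : G.Walk u z)
    (hpos : 0 < w.length) (halt : alt2 s s' true w.edges) :
    ∃ hne : w.edges ≠ [], z ∈ w.edges.getLast hne ∧
      w.edges.getLast hne ∈ (if Even w.length then s' \ s else s \ s') := by
  have hne : w.edges ≠ [] := by
    intro h
    rw [← Walk.length_edges, h] at hpos
    simp at hpos
  refine ⟨hne, ?_, ?_⟩
  · obtain ⟨e, he, hz⟩ := end_mem_getLast w hne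
    rw [List.getLast?_eq_getLast hne] at he
    injection he with he
    rwa [he]
  · have hdec := List.dropLast_append_getLast hne
    have := (alt2_append _ _ _).mp (hdec ▸ halt)
    have h2 := this.2
    have hl : w.edges.dropLast.length = w.length - 1 := by
      rw [List.length_dropLast, Walk.length_edges]
    rw [hl] at h2
    rcases Nat.even_or_odd w.length with he | ho
    · have : ¬ Even (w.length - 1) := by
        rcases he with ⟨k, hk⟩
        rcases Nat.even_or_odd (w.length - 1) with h | h
        · exfalso; rcases h with ⟨m, hm⟩; omega
        · exact Nat.not_even_iff_odd.mpr h
      rw [if_neg this] at h2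
      rw [if_pos he]
      exact h2.1
    · have : Even (w.length - 1) := by
        rcases ho with ⟨k, hk⟩; exact ⟨k, by omega⟩
      rw [if_pos this] at h2
      rw [if_neg (Nat.not_even_iff_odd.mpr ho)]
      exact h2.1

lemma GROW {s s' : Set (Sym2 V)} (hs : MaxPM G s) (hs' : MaxPM G s') {u : V}
    (hu' : ¬ cov s' u) :
    ∀ (n : ℕ) {z : V} (w : G.Walk u z), Fintype.card V ≤ w.length + n →
      w.IsPath → 0 < w.length → alt2 s s' true w.edges →
      ∃ (z' : V) (w' : G.Walk u z'), w'.IsPath ∧ 0 < w'.length ∧ Even w'.length ∧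
        alt2 s s' true w'.edges ∧ ¬ cov s z' := by
  intro n
  induction n with
  | zero =>
    intro z w hcard hp _ _
    exact absurd hcard (by have := hp.length_lt; omega)
  | succ n ih =>
    intro z w hcard hp hpos halt
    obtain ⟨hne, hzl, hcls⟩ := last_edge_class w hpos halt
    set eL := w.edges.getLast hne with heL
    rcases Nat.even_or_odd w.length with heven | hodd
    · by_cases hz : cov s z
      · obtain ⟨e, hes, hze⟩ := hz
        obtain ⟨y, rfl⟩ := Sym2.mem_iff_exists.mp hze
        have hadj : G.Adj z y := (G.mem_edgeSet).mp (hs.1.1 hes)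
        rw [if_pos heven] at hcls
        have hes' : s(z, y) ∉ s' := by
          intro h
          have heq : s(z, y) = eL :=
            hs'.1.2 _ h eL hcls.1 z (Sym2.mem_mk_left _ _) hzl
          exact hcls.2 (heq ▸ hes)
        have hy : y ∉ w.support := by
          intro hy
          obtain ⟨g, hg, hgs, hyg⟩ :=
            INC w true hp halt y hy (fun h => hadj.ne h.symm) (fun _ => rfl)
          have heq : s(z, y) = g :=
            hs.1.2 _ hes _ hgs y (Sym2.mem_mk_right _ _) hyg
          have hzg : z ∈ g := heq ▸ Sym2.mem_mk_left _ _
          have hlg := edge_eq_getLast w hp hg hzg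
          rw [List.getLast?_eq_getLast hne] at hlg
          injection hlg with hlg
          rw [← hlg] at hgs
          exact hcls.2 hgs
        have hp2 : (w.concat hadj).IsPath := by
          rw [Walk.isPath_def, Walk.support_concat]
          simp [List.nodup_append, hp.support_nodup, hy, List.disjoint_singleton]
          exact fun a ha hay => hy (hay ▸ ha)
        have halt2 : alt2 s s' true (w.concat hadj).edges := by
          rw [Walk.edges_concat, List.concat_eq_append, alt2_append]
          refine ⟨halt, ?_⟩
          rw [Walk.length_edges, if_pos heven]
          exact ⟨⟨hes, hes'⟩, trivial⟩
        have := ih (w.concat hadj) (by rw [Walk.length_concat]; omega) hp2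
          (by rw [Walk.length_concat]; omega) halt2
        exact this
      · exact ⟨z, w, hp, hpos, heven, halt, hz⟩
    · have hcovz : cov s' z := by
        by_contra hnc
        obtain ⟨k, hk⟩ := hodd
        have hpat : altP s' false w.edges := (alt2_altP _ _ halt).2
        obtain ⟨t, ht, hcard'⟩ := AUG k w s' hs'.1 (by omega) hp hu' hnc hpat
        have := hs'.2 t ht
        omega
      obtain ⟨e, hes', hze⟩ := hcovz
      obtain ⟨y, rfl⟩ := Sym2.mem_iff_exists.mp hze
      have hadj : G.Adj z y := (G.mem_edgeSet).mp (hs'.1.1 hes')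
      rw [if_neg (Nat.not_even_iff_odd.mpr hodd)] at hcls
      have hes : s(z, y) ∉ s := by
        intro h
        have heq : s(z, y) = eL :=
          hs.1.2 _ h eL hcls.1 z (Sym2.mem_mk_left _ _) hzl
        exact hcls.2 (heq ▸ hes')
      have hy : y ∉ w.support := by
        intro hy
        by_cases hyu : y = u
        · exact hu' ⟨s(z, y), hes', hyu ▸ Sym2.mem_mk_right _ _⟩
        · obtain ⟨g, hg, hgs, hyg⟩ :=
            INC w false hp (alt2_swap _ _ halt) y hy
              (fun h => hadj.ne h.symm) (fun h => absurd h hyu)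
          have heq : s(z, y) = g :=
            hs'.1.2 _ hes' _ hgs y (Sym2.mem_mk_right _ _) hyg
          have hzg : z ∈ g := heq ▸ Sym2.mem_mk_left _ _
          have hlg := edge_eq_getLast w hp hg hzg
          rw [List.getLast?_eq_getLast hne] at hlg
          injection hlg with hlg
          rw [← hlg] at hgs
          exact hcls.2 hgs
      have hp2 : (w.concat hadj).IsPath := by
        rw [Walk.isPath_def, Walk.support_concat]
        simp [List.nodup_append, hp.support_nodup, hy, List.disjoint_singleton]
        exact fun a ha hay => hy (hay ▸ ha)
      have halt2 : alt2 s s' true (w.concat hadj).edges := by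
        rw [Walk.edges_concat, List.concat_eq_append, alt2_append]
        refine ⟨halt, ?_⟩
        rw [Walk.length_edges, if_neg (Nat.not_even_iff_odd.mpr hodd)]
        exact ⟨⟨hes', hes⟩, trivial⟩
      exact ih (w.concat hadj) (by rw [Walk.length_concat]; omega) hp2
        (by rw [Walk.length_concat]; omega) halt2

end OCD
end M4

section M5
open SimpleGraph
variable {V : Type u}

namespace OCD
variable {G : SimpleGraph V} [Fintype V]

lemma L1 {u v : V} (hu : u ∈ DSet G) (hv : v ∈ DSet G) (huv : G.Adj u v) :
    ∃ c : G.Walk v v, c.IsCycle ∧ Odd c.length ∧ s(u, v) ∈ c.edges ∧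
      ∀ x ∈ c.support, x ∈ DSet G := by
  classical
  obtain ⟨s, hs, hcv⟩ := mem_DSet_iff.mp hv
  obtain ⟨s', hs', hcu'⟩ := mem_DSet_iff.mp hu
  have hcu : cov s u := by
    by_contra hnc
    obtain ⟨hpm, hc⟩ := PM_insert hs.1 huv hnc hcv
    have := hs.2 _ hpm
    omega
  obtain ⟨e1, he1, hue⟩ := hcu
  obtain ⟨y0, rfl⟩ := Sym2.mem_iff_exists.mp hue
  have hadj0 : G.Adj u y0 := (G.mem_edgeSet).mp (hs.1.1 he1)
  have he1' : s(u, y0) ∉ s' := fun h => hcu' ⟨_, h, Sym2.mem_mk_left _ _⟩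
  have halt0 : alt2 s s' true (Walk.cons hadj0 Walk.nil).edges := by
    rw [Walk.edges_cons, Walk.edges_nil]
    exact ⟨by simp [he1, he1'], trivial⟩
  obtain ⟨z, w, hp, hpos, heven, halt, hcz⟩ :=
    GROW hs hs' hcu' (Fintype.card V) (Walk.cons hadj0 Walk.nil)
      (by simp) (by simp [Walk.isPath_def, hadj0.ne]) (by simp) halt0
  have haltPs : altP s true w.edges := (alt2_altP _ _ halt).1
  have hzv : z = v := by
    by_contra hne
    have hvs : v ∉ w.support := by
      intro hvw
      obtain ⟨g, hg, hgs, hvg⟩ := INC w true hp halt v hvw (fun h => hne h.symm) (fun _ => rfl)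
      exact hcv ⟨g, hgs, hvg⟩
    have hqp : (Walk.cons huv.symm w).IsPath :=
      (Walk.cons_isPath_iff _ _).mpr ⟨hp, hvs⟩
    have hvu : s(v, u) ∉ s := fun h => hcv ⟨_, h, Sym2.mem_mk_left _ _⟩
    have hqa : altP s false (Walk.cons huv.symm w).edges := by
      rw [Walk.edges_cons]
      exact ⟨by simp [hvu], haltPs⟩
    obtain ⟨k, hk⟩ := heven
    obtain ⟨t, ht, hcard⟩ := AUG k (Walk.cons huv.symm w) s hs.1
      (by rw [Walk.length_cons]; omega) hqp hcv hcz hqa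
    have := hs.2 t ht
    omega
  subst hzv
  have hvuw : s(z, u) ∉ w.edges := by
    intro h
    have h1 := edge_eq_head w hp h (Sym2.mem_mk_right _ _)
    obtain ⟨hne, hzl, hcls⟩ := last_edge_class w hpos halt
    have h2 := edge_eq_getLast w hp h (Sym2.mem_mk_left _ _)
    rw [List.getLast?_eq_getLast hne] at h2
    injection h2 with h2
    rw [if_pos heven, h2] at hcls
    -- s(v,u) is also the first edge, which is in s \ s'
    obtain ⟨l, hl⟩ := List.exists_cons_of_ne_nil hne
    obtain ⟨e0, hl0⟩ := hl
    rw [hl0] at haltPs h1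
    simp only [List.head?_cons] at h1
    injection h1 with h1
    rw [h1] at haltPs
    exact hcls.2 (haltPs.1.mpr rfl)
  have hcyc : (Walk.cons huv.symm w).IsCycle :=
    (Walk.cons_isCycle_iff w huv.symm).mpr ⟨hp, hvuw⟩
  refine ⟨Walk.cons huv.symm w, hcyc, ?_, ?_, ?_⟩
  · rw [Walk.length_cons]
    obtain ⟨k, hk⟩ := heven
    exact ⟨k, by omega⟩
  · rw [Walk.edges_cons, Sym2.eq_swap]
    exact List.mem_cons_self
  · intro x hx
    rw [Walk.support_cons] at hx
    by_cases hxv : x = z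
    · exact hxv ▸ hv
    have hxw : x ∈ w.support := by
      rcases List.mem_cons.mp hx with rfl | h
      · exact absurd rfl hxv
      · exact h
    set q1 := w.takeUntil x hxw with hq1def
    set q2 := w.dropUntil x hxw with hq2def
    have hspec : q1.append q2 = w := w.take_spec hxw
    have hq1p : q1.IsPath := hp.takeUntil hxw
    have hq2p : q2.IsPath := hp.dropUntil hxw
    have hedges : q1.edges ++ q2.edges = w.edges := by
      rw [← Walk.edges_append, hspec]
    have hlen : q1.length + q2.length = w.length := by
      rw [← Walk.length_append, hspec]
    have hsplit := (altP_append q1.edges q2.edges true).mp (hedges ▸ haltPs)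
    have hA : altP s true q1.edges := hsplit.1
    have hB := hsplit.2
    rw [Walk.length_edges] at hB
    rcases Nat.even_or_odd q1.length with hq1e | hq1o
    · -- use the reversed second part
      rw [if_pos hq1e] at hB
      have hq2pos : 0 < q2.length := by
        rcases Nat.eq_zero_or_pos q2.length with h0 | h0
        · exact absurd (Walk.eq_of_length_eq_zero h0) hxv
        · exact h0
      have hq2e : Even q2.length := by
        obtain ⟨k, hk⟩ := heven
        obtain ⟨m, hm⟩ := hq1e
        exact ⟨(w.length - q1.length) / 2, by omega⟩
      have hrp : q2.reverse.IsPath := hq2p.reverse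
      have hra : altP s false q2.reverse.edges := by
        have := altP_reverse q2.edges true hB
        rw [Walk.length_edges, if_pos hq2e] at this
        rwa [Walk.edges_reverse]
      obtain ⟨m, hm⟩ := hq2e
      obtain ⟨t, ht, hcard, hcovx⟩ := TOG m q2.reverse s hs.1
        (by rw [Walk.length_reverse]; omega) hrp hcv hra
      exact mem_DSet_iff.mpr ⟨t, ⟨ht, fun t' ht' => hcard ▸ hs.2 t' ht'⟩, hcovx⟩
    · -- prepend the edge vu to the first part
      rw [if_neg (Nat.not_even_iff_odd.mpr hq1o)] at hB
      have hvq1 : z ∉ q1.support := by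
        intro hvq
        have hvq2 : z ∈ q2.support.tail := by
          have hv2 : z ∈ q2.support := q2.end_mem_support
          rw [q2.support_eq_cons] at hv2
          rcases List.mem_cons.mp hv2 with h | h
          · exact absurd h.symm hxv
          · exact h
        have hws : q1.support ++ q2.support.tail = w.support := by
          rw [← Walk.support_append, hspec]
        have hnd : (q1.support ++ q2.support.tail).Nodup := hws ▸ hp.support_nodup
        exact (List.disjoint_of_nodup_append hnd) hvq hvq2
      have hqp : (Walk.cons huv.symm q1).IsPath :=
        (Walk.cons_isPath_iff _ _).mpr ⟨hq1p, hvq1⟩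
      have hvu : s(z, u) ∉ s := fun h => hcv ⟨_, h, Sym2.mem_mk_left _ _⟩
      have hqa : altP s false (Walk.cons huv.symm q1).edges := by
        rw [Walk.edges_cons]
        exact ⟨by simp [hvu], hA⟩
      obtain ⟨m, hm⟩ := hq1o
      obtain ⟨t, ht, hcard, hcovx⟩ := TOG (m + 1) (Walk.cons huv.symm q1) s hs.1
        (by rw [Walk.length_cons]; omega) hqp hcv hqa
      exact mem_DSet_iff.mpr ⟨t, ⟨ht, fun t' ht' => hcard ▸ hs.2 t' ht'⟩, hcovx⟩

end OCD
end M5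

section M6
open SimpleGraph
variable {V : Type u}

namespace OCD
variable {G : SimpleGraph V} {S : Set V}

def liftW : ∀ {x y : V} (w : G.Walk x y) (hx : x ∈ S) (hy : y ∈ S),
    (∀ v ∈ w.support, v ∈ S) → (G.induce S).Walk ⟨x, hx⟩ ⟨y, hy⟩
  | _, _, Walk.nil, _, _, _ => Walk.nil
  | _, _, Walk.cons (v := c) hadj p, hx, hy, h =>
      Walk.cons
        (show (G.induce S).Adj ⟨_, hx⟩ ⟨c, h c (by simp)⟩ from hadj)
        (liftW p (h c (by simp)) hy (fun v hv => h v (by simp [hv])))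

lemma liftW_support : ∀ {x y : V} (w : G.Walk x y) (hx : x ∈ S) (hy : y ∈ S)
    (h : ∀ v ∈ w.support, v ∈ S),
    (liftW w hx hy h).support.map Subtype.val = w.support
  | _, _, Walk.nil, _, _, _ => by simp [liftW]
  | _, _, Walk.cons hadj p, hx, hy, h => by
      simp [liftW, liftW_support p _ _ _]

lemma liftW_edges : ∀ {x y : V} (w : G.Walk x y) (hx : x ∈ S) (hy : y ∈ S)
    (h : ∀ v ∈ w.support, v ∈ S),
    (liftW w hx hy h).edges.map (Sym2.map Subtype.val) = w.edges
  | _, _, Walk.nil, _, _, _ => by simp [liftW]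
  | _, _, Walk.cons hadj p, hx, hy, h => by
      simp [liftW, liftW_edges p _ _ _]

lemma liftW_length {x y : V} (w : G.Walk x y) (hx : x ∈ S) (hy : y ∈ S)
    (h : ∀ v ∈ w.support, v ∈ S) : (liftW w hx hy h).length = w.length := by
  rw [← Walk.length_edges, ← Walk.length_edges, ← liftW_edges w hx hy h, List.length_map]

lemma liftW_mem_support {x y : V} (w : G.Walk x y) (hx : x ∈ S) (hy : y ∈ S)
    (h : ∀ v ∈ w.support, v ∈ S) (a : S) :
    a ∈ (liftW w hx hy h).support ↔ (a : V) ∈ w.support := by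
  rw [← liftW_support w hx hy h]
  constructor
  · exact fun ha => List.mem_map_of_mem ha
  · intro ha
    obtain ⟨b, hb, hba⟩ := List.mem_map.mp ha
    rwa [Subtype.val_injective hba] at hb

lemma liftW_mem_edges {x y : V} (w : G.Walk x y) (hx : x ∈ S) (hy : y ∈ S)
    (h : ∀ v ∈ w.support, v ∈ S) (a b : S) :
    s(a, b) ∈ (liftW w hx hy h).edges ↔ s((a : V), (b : V)) ∈ w.edges := by
  rw [← liftW_edges w hx hy h]
  constructor
  · intro ha
    have := List.mem_map_of_mem (f := Sym2.map Subtype.val) ha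
    simpa using this
  · intro ha
    obtain ⟨e, he, hee⟩ := List.mem_map.mp ha
    have : e = s(a, b) := by
      apply Sym2.map.injective Subtype.val_injective
      simpa using hee
    rwa [this] at he

lemma liftW_isCycle {x : V} (w : G.Walk x x) (hx : x ∈ S)
    (h : ∀ v ∈ w.support, v ∈ S) (hc : w.IsCycle) : (liftW w hx hx h).IsCycle := by
  rw [Walk.isCycle_def]
  refine ⟨⟨?_⟩, ?_, ?_⟩
  · exact List.Nodup.of_map _ ((liftW_edges w hx hx h).symm ▸ hc.edges_nodup)
  · intro hnil
    have := liftW_length w hx hx h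
    rw [hnil] at this
    simp only [Walk.length_nil] at this
    exact hc.ne_nil (Walk.nil_iff_eq_nil.mp (Walk.length_eq_zero_iff.mp this.symm))
  · refine List.Nodup.of_map Subtype.val ?_
    have heq : ((liftW w hx hx h).support.map Subtype.val).tail = w.support.tail := by
      rw [liftW_support w hx hx h]
    rw [← List.map_tail] at heq
    rw [heq]
    exact hc.support_nodup

end OCD
end M6

section M7
open SimpleGraph
variable {V : Type u}

namespace OCD
variable {G : SimpleGraph V}

lemma loop_path {a : V} {w : G.Walk a a} (hw : w.IsPath) : w.length = 0 := by
  cases w with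
  | nil => rfl
  | cons h p =>
    exfalso
    exact ((Walk.cons_isPath_iff _ _).mp hw).2 p.end_mem_support

lemma end_mem_support_tail {a b : V} (w : G.Walk a b) (hw : 0 < w.length) :
    b ∈ w.support.tail := by
  cases w with
  | nil => simp at hw
  | cons h p => simpa using p.end_mem_support

lemma chord
    (hdisj : ∀ C C' : Set V, IsOddCycle G C → IsOddCycle G C' → C ≠ C' → C ∩ C' = ∅)
    {v : V} {c : G.Walk v v} (hc : c.IsCycle) (hodd : Odd c.length)
    {x y : V} (hxy : G.Adj x y) (hx : x ∈ c.support) (hy : y ∈ c.support) :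
    s(x, y) ∈ c.edges := by
  classical
  by_contra hne
  -- the master contradiction: an even x-y path P and an odd x-y path Q, arcs of c
  have key : ∀ (P Q : G.Walk x y), P.IsPath → Q.IsPath → Even P.length →
      P.length + Q.length = c.length →
      (∀ e ∈ P.edges, e ∈ c.edges) → (∀ e ∈ Q.edges, e ∈ c.edges) →
      (∀ z, z ∈ P.support → z ∈ Q.support → z = x ∨ z = y) → False := by
    intro P Q hP hQ hPe hsum hPed hQed hint
    have hchordP : s(y, x) ∉ P.edges := by
      rw [Sym2.eq_swap]
      exact fun h => hne (hPed _ h)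
    have hc3 : (Walk.cons hxy.symm P).IsCycle :=
      (Walk.cons_isCycle_iff P hxy.symm).mpr ⟨hP, hchordP⟩
    have hodd3 : Odd (Walk.cons hxy.symm P).length := by
      rw [Walk.length_cons]
      obtain ⟨k, hk⟩ := hPe
      exact ⟨k, by omega⟩
    -- find an interior vertex of Q
    cases Q with
    | nil => exact hxy.ne rfl
    | cons h' q' =>
      rename_i m
      by_cases hq0 : q'.length = 0
      · have hm : m = y := Walk.eq_of_length_eq_zero hq0
        subst hm
        refine hne (hQed _ ?_)
        simp
      · have hmx : m ≠ x := by
          intro hh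
          exact ((Walk.cons_isPath_iff _ _).mp hQ).2 (hh ▸ q'.start_mem_support)
        have hmy : m ≠ y := by
          intro hh
          subst hh
          exact hq0 (loop_path ((Walk.cons_isPath_iff _ _).mp hQ).1)
        have hmQ : m ∈ (Walk.cons h' q').support := by
          rw [Walk.support_cons]
          exact List.mem_cons_of_mem _ q'.start_mem_support
        have hmc : m ∈ c.support := by
          have hedge : s(x, m) ∈ c.edges := hQed _ (by simp)
          exact c.snd_mem_support_of_mem_edges hedge
        have hmP : m ∉ P.support := by
          intro hh
          rcases hint m hh hmQ with h1 | h1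
          · exact hmx h1
          · exact hmy h1
        have hC1 : IsOddCycle G {z | z ∈ c.support} := ⟨v, c, hc, hodd, fun _ => Iff.rfl⟩
        have hC3 : IsOddCycle G {z | z ∈ (Walk.cons hxy.symm P).support} :=
          ⟨y, _, hc3, hodd3, fun _ => Iff.rfl⟩
        have hnemem : m ∉ {z | z ∈ (Walk.cons hxy.symm P).support} := by
          intro hh
          rw [Set.mem_setOf_eq, Walk.support_cons] at hh
          rcases List.mem_cons.mp hh with h1 | h1
          · exact hmy h1
          · exact hmP h1
        have hnee : {z | z ∈ c.support} ≠ {z | z ∈ (Walk.cons hxy.symm P).support} := by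
          intro hh
          exact hnemem (hh ▸ hmc)
        have hdis := hdisj _ _ hC1 hC3 hnee
        have hxin : x ∈ ({z | z ∈ c.support} ∩ {z | z ∈ (Walk.cons hxy.symm P).support} :
            Set V) := by
          refine ⟨hx, ?_⟩
          rw [Walk.support_cons]
          exact List.mem_cons_of_mem _ P.start_mem_support
        rw [hdis] at hxin
        exact hxin
  -- rotate the cycle to start at x
  obtain ⟨w0, hw0cyc, hw0len, hw0supp, hw0edges⟩ :
      ∃ w0 : G.Walk x x, w0.IsCycle ∧ w0.length = c.length ∧
        (∀ z, z ∈ w0.support ↔ z ∈ c.support) ∧ (∀ e, e ∈ w0.edges ↔ e ∈ c.edges) := by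
    refine ⟨c.rotate x hx, hc.rotate hx, ?_, ?_, fun e => (c.rotate_edges x hx).perm.mem_iff⟩
    · rw [← Walk.length_edges, ← Walk.length_edges, (c.rotate_edges x hx).perm.length_eq]
    · intro z
      have htail := c.support_rotate x hx
      have h1 : 0 < c.length := by
        rcases hodd with ⟨k, hk⟩; omega
      have h2 : 0 < (c.rotate x hx).length := by
        rw [← Walk.length_edges, (c.rotate_edges x hx).perm.length_eq, Walk.length_edges]
        exact h1
      constructor
      · intro hz
        rw [Walk.support_eq_cons] at hz
        rcases List.mem_cons.mp hz with rfl | hz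
        · exact hx
        · rw [Walk.support_eq_cons]
          exact List.mem_cons_of_mem _ (htail.mem_iff.mp hz)
      · intro hz
        rw [Walk.support_eq_cons] at hz
        rcases List.mem_cons.mp hz with rfl | hz
        · rw [Walk.support_eq_cons]
          exact List.mem_cons_of_mem _ (htail.mem_iff.mpr (end_mem_support_tail c h1))
        · rw [Walk.support_eq_cons]
          exact List.mem_cons_of_mem _ (htail.mem_iff.mpr hz)
  cases w0 with
  | nil => exact hw0cyc.ne_nil rfl
  | cons hadj r =>
    rename_i c₁
    obtain ⟨hrp, hrne⟩ := (Walk.cons_isCycle_iff r hadj).mp hw0cyc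
    have hyr : y ∈ r.support := by
      have hyw := (hw0supp y).mpr hy
      rw [Walk.support_cons] at hyw
      rcases List.mem_cons.mp hyw with rfl | h
      · exact absurd rfl hxy.ne
      · exact h
    set r1 := r.takeUntil y hyr with hr1def
    set r2 := r.dropUntil y hyr with hr2def
    have hspec : r1.append r2 = r := r.take_spec hyr
    have hr1p : r1.IsPath := hrp.takeUntil hyr
    have hr2p : r2.IsPath := hrp.dropUntil hyr
    have hlen12 : r1.length + r2.length = r.length := by
      rw [← Walk.length_append, hspec]
    have hxnr1 : x ∉ r1.support := by
      intro hh
      have hx2 : x ∈ r2.support.tail := by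
        have := r2.end_mem_support
        rw [r2.support_eq_cons] at this
        rcases List.mem_cons.mp this with h1 | h1
        · exact absurd h1 hxy.ne
        · exact h1
      have hws : r1.support ++ r2.support.tail = r.support := by
        rw [← Walk.support_append, hspec]
      have hnd : (r1.support ++ r2.support.tail).Nodup := hws ▸ hrp.support_nodup
      exact (List.disjoint_of_nodup_append hnd) hh hx2
    have hApath : (Walk.cons hadj r1).IsPath := by
      rw [Walk.cons_isPath_iff]
      refine ⟨hr1p, fun hh => hxnr1 ?_⟩
      exact hh
    have hBpath : r2.reverse.IsPath := hr2p.reverse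
    have hAedges : ∀ e ∈ (Walk.cons hadj r1).edges, e ∈ c.edges := by
      intro e he
      rw [Walk.edges_cons] at he
      rcases List.mem_cons.mp he with rfl | he
      · exact (hw0edges _).mp (by simp)
      · exact (hw0edges _).mp (by
          rw [Walk.edges_cons]
          exact List.mem_cons_of_mem _ (r.edges_takeUntil_subset hyr he))
    have hBedges : ∀ e ∈ r2.reverse.edges, e ∈ c.edges := by
      intro e he
      rw [Walk.edges_reverse, List.mem_reverse] at he
      exact (hw0edges _).mp (by
        rw [Walk.edges_cons]
        exact List.mem_cons_of_mem _ (r.edges_dropUntil_subset hyr he))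
    have hint : ∀ z, z ∈ (Walk.cons hadj r1).support → z ∈ r2.reverse.support →
        z = x ∨ z = y := by
      intro z hzA hzB
      rw [Walk.support_cons] at hzA
      rw [Walk.support_reverse, List.mem_reverse] at hzB
      rcases List.mem_cons.mp hzA with rfl | hz1
      · exact Or.inl rfl
      · by_cases hzy : z = y
        · exact Or.inr hzy
        · exfalso
          have hz2 : z ∈ r2.support.tail := by
            rw [r2.support_eq_cons] at hzB
            rcases List.mem_cons.mp hzB with h1 | h1
            · exact absurd h1 hzy
            · exact h1
          have hws : r1.support ++ r2.support.tail = r.support := by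
            rw [← Walk.support_append, hspec]
          have hnd : (r1.support ++ r2.support.tail).Nodup := hws ▸ hrp.support_nodup
          exact (List.disjoint_of_nodup_append hnd) hz1 hz2
    have hsum : (Walk.cons hadj r1).length + r2.reverse.length = c.length := by
      rw [Walk.length_cons, Walk.length_reverse, ← hw0len, Walk.length_cons]
      omega
    rcases Nat.even_or_odd (Walk.cons hadj r1).length with hAe | hAo
    · exact key (Walk.cons hadj r1) r2.reverse hApath hBpath hAe hsum hAedges hBedges hint
    · have hBe : Even r2.reverse.length := by
        rcases hodd with ⟨k, hk⟩
        rcases hAo with ⟨j, hj⟩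
        rw [Walk.length_reverse]
        refine ⟨(c.length - (Walk.cons hadj r1).length) / 2, ?_⟩
        rw [Walk.length_reverse] at hsum
        omega
      exact key r2.reverse (Walk.cons hadj r1) hBpath hApath hBe
        (by omega) hBedges hAedges (fun z h1 h2 => hint z h2 h1)

end OCD
end M7

/-- In an odd-cycle-disjoint graph, every connected component of `G[D(G)]` is a
single vertex or an odd cycle. -/
theorem stmt_5 {V : Type u} [Fintype V] (G : SimpleGraph V)
    (hdisj : ∀ C C' : Set V, IsOddCycle G C → IsOddCycle G C' → C ≠ C' → C ∩ C' = ∅) :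
    ∀ K : (G.induce (DSet G)).ConnectedComponent,
      (∃ v, K.supp = {v}) ∨
      (∃ (u : ↥(DSet G)) (w : (G.induce (DSet G)).Walk u u),
        w.IsCycle ∧ Odd w.length ∧ (∀ v, v ∈ w.support ↔ v ∈ K.supp) ∧
        ∀ a b : ↥(DSet G), (G.induce (DSet G)).Adj a b → a ∈ K.supp → s(a, b) ∈ w.edges) := by
  classical
  intro K
  obtain ⟨x, hxK⟩ := K.exists_rep
  by_cases hsing : ∀ y : ↥(DSet G), y ∈ K.supp → y = x
  · left
    refine ⟨x, Set.ext fun y => ⟨fun h => hsing y h, fun h => ?_⟩⟩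
    rw [Set.mem_singleton_iff] at h
    subst h
    rw [ConnectedComponent.mem_supp_iff]
    exact hxK
  · right
    push_neg at hsing
    obtain ⟨y, hyK, hyx⟩ := hsing
    have hyKmk : (G.induce (DSet G)).connectedComponentMk y = K :=
      (ConnectedComponent.mem_supp_iff _ _).mp hyK
    have hreach : (G.induce (DSet G)).Reachable x y :=
      ConnectedComponent.exact (hxK.trans hyKmk.symm)
    obtain ⟨b, hab⟩ : ∃ b : ↥(DSet G), (G.induce (DSet G)).Adj x b := by
      obtain ⟨p⟩ := hreach
      cases p with
      | nil => exact absurd rfl hyx.symm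
      | cons h q => exact ⟨_, h⟩
    have hGadj : G.Adj (x : V) (b : V) := hab
    obtain ⟨c, hcyc, hodd, hmemb, hDall⟩ := OCD.L1 x.2 b.2 hGadj
    have hsupD : ∀ z ∈ c.support, z ∈ DSet G := hDall
    set cc := OCD.liftW c b.2 b.2 hsupD with hccdef
    have hcccyc : cc.IsCycle := OCD.liftW_isCycle c b.2 hsupD hcyc
    have hccodd : Odd cc.length := by
      rw [OCD.liftW_length c b.2 b.2 hsupD]
      exact hodd
    -- every induced edge leaving the cycle's support is a cycle edge
    have hE : ∀ a' b' : ↥(DSet G), (G.induce (DSet G)).Adj a' b' →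
        (a' : V) ∈ c.support → s(a', b') ∈ cc.edges := by
      intro a' b' hadj' ha'
      have hG' : G.Adj (a' : V) (b' : V) := hadj'
      obtain ⟨c₂, hcyc₂, hodd₂, hmem₂, hD₂⟩ := OCD.L1 a'.2 b'.2 hG'
      have hC1 : IsOddCycle G {z | z ∈ c.support} := ⟨_, c, hcyc, hodd, fun _ => Iff.rfl⟩
      have hC2 : IsOddCycle G {z | z ∈ c₂.support} := ⟨_, c₂, hcyc₂, hodd₂, fun _ => Iff.rfl⟩
      have ha'c₂ : (a' : V) ∈ c₂.support := c₂.fst_mem_support_of_mem_edges hmem₂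
      have heqset : {z | z ∈ c.support} = {z | z ∈ c₂.support} := by
        by_contra hneq
        have hdis := hdisj _ _ hC1 hC2 hneq
        have hmm : (a' : V) ∈ ({z | z ∈ c.support} ∩ {z | z ∈ c₂.support} : Set V) :=
          ⟨ha', ha'c₂⟩
        rw [hdis] at hmm
        exact hmm
      have hb'c : (b' : V) ∈ c.support := by
        have hb2 : (b' : V) ∈ {z | z ∈ c₂.support} := c₂.snd_mem_support_of_mem_edges hmem₂
        rw [← heqset] at hb2
        exact hb2
      have hedge : s((a' : V), (b' : V)) ∈ c.edges :=
        OCD.chord hdisj hcyc hodd hG' ha' hb'c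
      exact (OCD.liftW_mem_edges c b.2 b.2 hsupD a' b').mpr hedge
    have hbK : b ∈ K.supp := by
      rw [ConnectedComponent.mem_supp_iff, ← hxK]
      exact ConnectedComponent.sound hab.symm.reachable
    have hbcc : (⟨(b : V), b.2⟩ : ↥(DSet G)) ∈ cc.support := cc.start_mem_support
    -- closure: anything reachable from a support vertex is in the support
    have hclose : ∀ (z0 z1 : ↥(DSet G)) (q : (G.induce (DSet G)).Walk z0 z1),
        z0 ∈ cc.support → z1 ∈ cc.support := by
      intro z0 z1 q
      induction q with
      | nil => exact id
      | cons h q' ih =>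
        intro hz0
        apply ih
        have hedge := hE _ _ h ((OCD.liftW_mem_support c b.2 b.2 hsupD _).mp hz0)
        exact cc.snd_mem_support_of_mem_edges hedge
    have hKsub : ∀ z : ↥(DSet G), z ∈ K.supp → z ∈ cc.support := by
      intro z hz
      have hzmk : (G.induce (DSet G)).connectedComponentMk z = K :=
        (ConnectedComponent.mem_supp_iff _ _).mp hz
      have hbmk : (G.induce (DSet G)).connectedComponentMk b = K :=
        (ConnectedComponent.mem_supp_iff _ _).mp hbK
      obtain ⟨q⟩ := ConnectedComponent.exact (hbmk.trans hzmk.symm)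
      exact hclose _ _ q hbcc
    refine ⟨⟨(b : V), b.2⟩, cc, hcccyc, hccodd, ?_, ?_⟩
    · intro z
      constructor
      · intro hz
        have hr2 : (G.induce (DSet G)).Reachable ⟨(b : V), b.2⟩ z := ⟨cc.takeUntil z hz⟩
        rw [ConnectedComponent.mem_supp_iff]
        have h1 : (G.induce (DSet G)).connectedComponentMk z
            = (G.induce (DSet G)).connectedComponentMk ⟨(b : V), b.2⟩ :=
          ConnectedComponent.sound hr2.symm
        have h2 : (G.induce (DSet G)).connectedComponentMk b = K :=
          (ConnectedComponent.mem_supp_iff _ _).mp hbK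
        rw [h1]
        exact h2
      · exact hKsub z
    · intro a' b' hadj' ha'K
      have ha'cc : a' ∈ cc.support := hKsub a' ha'K
      exact hE a' b' hadj' ((OCD.liftW_mem_support c b.2 b.2 hsupD _).mp ha'cc)
end

section
/- Let G be a finite simple graph and M a maximum matching. For every vertex x in D(G) (the set of vertices missed by some maximum matching), either M leaves x unsaturated, or there exists an M-alternating path starting at x with a matched edge and ending at a vertex unsaturated by M. -/
open SimpleGraph

universe u

variable {V : Type u}

section AuxAltPath
open List

private lemma mem_support_of_mem_edges' {G : SimpleGraph V} {x y v : V} {p : G.Walk x y}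
    {e : Sym2 V} (he : e ∈ p.edges) (hv : v ∈ e) : v ∈ p.support := by
  induction e with
  | _ a b =>
    rcases Sym2.mem_iff.mp hv with rfl | rfl
    · exact p.fst_mem_support_of_mem_edges he
    · exact p.snd_mem_support_of_mem_edges he

private lemma alt_countP {α : Type*} : ∀ (l : List α) (q : α → Bool),
    l.Chain' (fun a b => q a ≠ q b) → (∀ a ∈ l.head?, q a = true) →
    l.countP q = l.countP (fun a => ! q a) +
      (l.getLast?.elim 0 (fun a => if q a then 1 else 0))
  | [], q, _, _ => by simp
  | [a], q, _, hh => by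
    have ha : q a = true := hh a rfl
    simp [List.countP_cons, ha]
  | a :: b :: t, q, hc, hh => by
    have ha : q a = true := hh a rfl
    obtain ⟨hab, hct⟩ := List.isChain_cons_cons.mp hc
    have hb : q b = false := by
      cases hqb : q b
      · rfl
      · exact absurd (ha.trans hqb.symm) hab
    have ih := alt_countP (b :: t) (fun x => ! q x)
      (hct.imp (fun {x y} h => by simp only [ne_eq, Bool.not_inj_iff]; exact h))
      (by intro c hc'; simp only [head?_cons, Option.mem_def, Option.some.injEq] at hc'
          subst hc'; simp [hb])
    have hcount : (b :: t).countP (fun x => !! q x) = (b :: t).countP q :=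
      List.countP_congr (by intro x _; simp)
    rw [hcount] at ih
    have hlast : (a :: b :: t).getLast? = (b :: t).getLast? := List.getLast?_cons_cons ..
    obtain ⟨c, hc2⟩ : ∃ c, (b :: t).getLast? = some c :=
      ⟨(b :: t).getLast (by simp), List.getLast?_eq_getLast (by simp)⟩
    rw [hlast, hc2]
    rw [hc2] at ih
    cases hqc : q c <;>
      simp only [List.countP_cons, ha, hb, hqc, Option.elim_some, Bool.not_true, Bool.not_false,
        if_true, if_false, decide_eq_true_eq, Bool.false_eq_true, Bool.true_eq_false] at ih ⊢ <;>
      omega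

private lemma cover {G : SimpleGraph V} {M M' : G.Subgraph} :
    ∀ (L : ℕ) {x y : V} (p : G.Walk x y), p.length ≤ L →
    List.Chain' (fun e f => e ∈ M.edgeSet ↔ f ∉ M.edgeSet) p.edges →
    (∀ e ∈ p.edges, (e ∈ M.edgeSet ∧ e ∉ M'.edgeSet) ∨ (e ∉ M.edgeSet ∧ e ∈ M'.edgeSet)) →
    (∀ e ∈ p.edges.head?, e ∈ M.edgeSet) →
    (∀ e ∈ p.edges.getLast?, e ∈ M.edgeSet) →
    ¬ p.Nil →
    (∀ v ∈ p.support, ∃ e ∈ p.edges, v ∈ e ∧ e ∈ M.edgeSet) ∧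
    (∀ v ∈ p.support, v ≠ x → v ≠ y → ∃ e ∈ p.edges, v ∈ e ∧ e ∈ M'.edgeSet) := by
  intro L
  induction L with
  | zero =>
    intro x y p hlen _ _ _ _ hnil
    exact absurd (Walk.nil_iff_length_eq.mpr (Nat.le_zero.mp hlen)) hnil
  | succ L ih =>
    intro x y p hlen hchain hmem hhead hlast hnil
    cases p with
    | nil => simp at hnil
    | @cons _ a _ h q =>
      cases q with
      | nil =>
        have he1 : s(x, y) ∈ M.edgeSet := hhead _ (by simp)
        constructor
        · intro v hv
          simp only [Walk.support_cons, Walk.support_nil, List.mem_cons, List.mem_singleton,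
            List.not_mem_nil, or_false] at hv
          rcases hv with rfl | rfl
          · exact ⟨s(v, y), by simp, by simp, he1⟩
          · exact ⟨s(x, v), by simp, by simp, he1⟩
        · intro v hv hvx hvy
          simp only [Walk.support_cons, Walk.support_nil, List.mem_cons, List.mem_singleton,
            List.not_mem_nil, or_false] at hv
          rcases hv with rfl | rfl
          · exact absurd rfl hvx
          · exact absurd rfl hvy
      | @cons _ b _ h₂ r =>
        have hedges : (Walk.cons h (Walk.cons h₂ r)).edges = s(x, a) :: s(a, b) :: r.edges := rfl
        have he1 : s(x, a) ∈ M.edgeSet := hhead _ (by simp [hedges])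
        rw [hedges] at hchain hmem hhead hlast
        obtain ⟨hrel12, hchain2⟩ := List.isChain_cons_cons.mp hchain
        have he2M : s(a, b) ∉ M.edgeSet := hrel12.mp he1
        have he2M' : s(a, b) ∈ M'.edgeSet := by
          rcases hmem s(a, b) (by simp) with ⟨hh, _⟩ | ⟨_, hh⟩
          · exact absurd hh he2M
          · exact hh
        by_cases hr : r.Nil
        · exfalso
          have : r.edges = [] := List.length_eq_zero_iff.mp
            (by rw [Walk.length_edges]; exact Walk.nil_iff_length_eq.mp hr)
          have : s(a, b) ∈ M.edgeSet := hlast _ (by simp [this])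
          exact he2M this
        · have hrne : r.edges ≠ [] := by
            intro hcon
            exact hr (Walk.nil_iff_length_eq.mpr (by rw [← Walk.length_edges, hcon]; rfl))
          obtain ⟨c, s', hcs⟩ := List.exists_cons_of_ne_nil hrne
          have hrlen : r.length ≤ L := by
            have : (Walk.cons h (Walk.cons h₂ r)).length = r.length + 2 := by simp
            omega
          rw [hcs] at hchain2
          obtain ⟨hrel23, hchain3⟩ := List.isChain_cons_cons.mp hchain2
          have hcM : c ∈ M.edgeSet := by
            by_contra hcon
            exact he2M (hrel23.mpr hcon)
          have IH := ih r hrlen (hcs ▸ hchain3) (fun e he => hmem e (by simp [he]))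
            (by intro e he; rw [hcs] at he
                simp only [head?_cons, Option.mem_def, Option.some.injEq] at he
                subst he; exact hcM)
            (by intro e he; rw [hcs] at he
                have : (s(x,a) :: s(a,b) :: c :: s').getLast? = (c :: s').getLast? := by
                  rw [List.getLast?_cons_cons, List.getLast?_cons_cons]
                exact hlast e (by rw [hcs, this]; exact he))
            hr
          have hsup : (Walk.cons h (Walk.cons h₂ r)).support = x :: a :: r.support := rfl
          constructor
          · intro v hv
            rw [hsup] at hv
            rcases List.mem_cons.mp hv with rfl | hv
            · exact ⟨s(v, a), by simp, by simp, he1⟩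
            rcases List.mem_cons.mp hv with rfl | hv
            · exact ⟨s(x, v), by simp, by simp, he1⟩
            · obtain ⟨e, he, hve, heM⟩ := IH.1 v hv
              exact ⟨e, by simp [he], hve, heM⟩
          · intro v hv hvx hvy
            rw [hsup] at hv
            rcases List.mem_cons.mp hv with rfl | hv
            · exact absurd rfl hvx
            rcases List.mem_cons.mp hv with rfl | hv
            · exact ⟨s(v, b), by simp, by simp, he2M'⟩
            by_cases hvb : v = b
            · subst hvb
              exact ⟨s(a, v), by simp, by simp, he2M'⟩
            · obtain ⟨e, he, hve, heM'⟩ := IH.2 v hv hvb hvy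
              exact ⟨e, by simp [he], hve, heM'⟩

private lemma no_augment [Fintype V] {G : SimpleGraph V} {M M' : G.Subgraph}
    (hM : M.IsMatching) (hM' : M'.IsMatching)
    (hmax : ∀ N : G.Subgraph, N.IsMatching → N.edgeSet.ncard ≤ M'.edgeSet.ncard)
    {x y : V} (p : G.Walk x y) (hpath : p.IsPath)
    (hchain : List.Chain' (fun e f => e ∈ M.edgeSet ↔ f ∉ M.edgeSet) p.edges)
    (hmem : ∀ e ∈ p.edges, (e ∈ M.edgeSet ∧ e ∉ M'.edgeSet) ∨ (e ∉ M.edgeSet ∧ e ∈ M'.edgeSet))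
    (hhead : ∀ e ∈ p.edges.head?, e ∈ M.edgeSet)
    (hlast : ∀ e ∈ p.edges.getLast?, e ∈ M.edgeSet)
    (hnil : ¬ p.Nil)
    (hx : x ∉ M'.verts) (hy : y ∉ M'.verts) : False := by
  classical
  obtain ⟨F3a, F3b⟩ := cover p.length p le_rfl hchain hmem hhead hlast hnil
  have F2 : ∀ e ∈ M'.edgeSet, ∀ v ∈ e, v ∈ p.support → e ∈ p.edges := by
    intro e heM' v hve hvs
    have hvM' : v ∈ M'.verts := by
      induction e with
      | _ a b =>
        have hadj : M'.Adj a b := Subgraph.mem_edgeSet.mp heM'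
        rcases Sym2.mem_iff.mp hve with rfl | rfl
        · exact hadj.fst_mem
        · exact hadj.symm.fst_mem
    have hvx : v ≠ x := fun h => hx (h ▸ hvM')
    have hvy : v ≠ y := fun h => hy (h ▸ hvM')
    obtain ⟨f, hf, hvf, hfM'⟩ := F3b v hvs hvx hvy
    obtain ⟨c, rfl⟩ := Sym2.mem_iff_exists.mp hve
    obtain ⟨d, rfl⟩ := Sym2.mem_iff_exists.mp hvf
    have h1 : M'.Adj v c := Subgraph.mem_edgeSet.mp heM'
    have h2 : M'.Adj v d := Subgraph.mem_edgeSet.mp hfM'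
    have : c = d := (hM' h1.fst_mem).unique h1 h2
    subst this
    exact hf
  let N : G.Subgraph :=
  { verts := M'.verts ∪ {v | v ∈ p.support}
    Adj := fun v w => (M'.Adj v w ∧ v ∉ p.support ∧ w ∉ p.support) ∨
      (s(v, w) ∈ p.edges ∧ s(v, w) ∈ M.edgeSet)
    adj_sub := by
      rintro v w (⟨h, -, -⟩ | ⟨h, -⟩)
      · exact h.adj_sub
      · exact p.adj_of_mem_edges h
    edge_vert := by
      rintro v w (⟨h, -, -⟩ | ⟨h, -⟩)
      · exact Or.inl h.fst_mem
      · exact Or.inr (p.fst_mem_support_of_mem_edges h)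
    symm := by
      constructor
      rintro v w (⟨h, h1, h2⟩ | ⟨h1, h2⟩)
      · exact Or.inl ⟨h.symm, h2, h1⟩
      · exact Or.inr ⟨Sym2.eq_swap ▸ h1, Sym2.eq_swap ▸ h2⟩ }
  have hNmatch : N.IsMatching := by
    intro v hv
    by_cases hvs : v ∈ p.support
    · obtain ⟨e, he, hve, heM⟩ := F3a v hvs
      obtain ⟨w, rfl⟩ := Sym2.mem_iff_exists.mp hve
      refine ⟨w, Or.inr ⟨he, heM⟩, ?_⟩
      rintro w' (⟨-, hcon, -⟩ | ⟨h1, h2⟩)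
      · exact absurd hvs hcon
      · exact (hM (Subgraph.mem_edgeSet.mp h2).fst_mem).unique
          (Subgraph.mem_edgeSet.mp h2) (Subgraph.mem_edgeSet.mp heM)
    · have hvM' : v ∈ M'.verts := by
        rcases hv with h | h
        · exact h
        · exact absurd h hvs
      obtain ⟨w, hw, -⟩ := hM' hvM'
      have hws : w ∉ p.support := by
        intro hws
        have := F2 s(v, w) (Subgraph.mem_edgeSet.mpr hw) w (by simp) hws
        exact hvs (p.fst_mem_support_of_mem_edges this)
      refine ⟨w, Or.inl ⟨hw, hvs, hws⟩, ?_⟩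
      rintro w' (⟨h1, -, -⟩ | ⟨h1, -⟩)
      · exact (hM' hvM').unique h1 hw
      · exact absurd (p.fst_mem_support_of_mem_edges h1) hvs
  set A := M'.edgeSet with hA
  set B := {e : Sym2 V | e ∈ p.edges ∧ e ∈ M'.edgeSet} with hB
  set C := {e : Sym2 V | e ∈ p.edges ∧ e ∈ M.edgeSet} with hC
  have hNedge : N.edgeSet = (A \ B) ∪ C := by
    ext e
    induction e with
    | _ v w =>
      simp only [Set.mem_union, Set.mem_diff, hA, hB, hC, Set.mem_setOf_eq,
        Subgraph.mem_edgeSet]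
      constructor
      · rintro (⟨h1, h2, h3⟩ | ⟨h1, h2⟩)
        · exact Or.inl ⟨h1, fun hcon => h2 (p.fst_mem_support_of_mem_edges hcon.1)⟩
        · exact Or.inr ⟨h1, h2⟩
      · rintro (⟨h1, h2⟩ | ⟨h1, h2⟩)
        · refine Or.inl ⟨h1, ?_, ?_⟩
          · intro hcon
            exact h2 ⟨F2 s(v, w) (Subgraph.mem_edgeSet.mpr h1) v (by simp) hcon,
              Subgraph.mem_edgeSet.mpr h1⟩
          · intro hcon
            exact h2 ⟨F2 s(v, w) (Subgraph.mem_edgeSet.mpr h1) w (by simp) hcon,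
              Subgraph.mem_edgeSet.mpr h1⟩
        · exact Or.inr ⟨h1, h2⟩
  have hBA : B ⊆ A := fun e he => he.2
  have hdisj : Disjoint (A \ B) C := by
    rw [Set.disjoint_left]
    rintro e ⟨heA, -⟩ ⟨hep, heM⟩
    rcases hmem e hep with ⟨-, h2⟩ | ⟨h1, -⟩
    · exact h2 heA
    · exact h1 heM
  -- counting
  have hnodup : p.edges.Nodup := hpath.edges_nodup
  have hne : p.edges ≠ [] := by
    intro hcon
    exact hnil (Walk.nil_iff_length_eq.mpr (by rw [← Walk.length_edges, hcon]; rfl))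
  set q : Sym2 V → Bool := fun e => decide (e ∈ M.edgeSet) with hq
  set q' : Sym2 V → Bool := fun e => decide (e ∈ M'.edgeSet) with hq'
  have hchainb : p.edges.Chain' (fun a b => q a ≠ q b) := by
    refine hchain.imp ?_
    intro a b h hcon
    rw [hq] at hcon
    simp only [decide_eq_decide] at hcon
    by_cases ha : a ∈ M.edgeSet
    · exact (h.mp ha) (hcon.mp ha)
    · exact ha (hcon.mpr (by by_contra hb; exact ha (h.mpr hb)))
  have hheadb : ∀ a ∈ p.edges.head?, q a = true := by
    intro a ha
    simp only [hq, decide_eq_true_eq]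
    exact hhead a ha
  obtain ⟨eL, heL⟩ : ∃ eL, p.edges.getLast? = some eL := by
    obtain ⟨c, s', hcs⟩ := List.exists_cons_of_ne_nil hne
    exact ⟨(c :: s').getLast (by simp), by rw [hcs]; exact List.getLast?_eq_getLast (by simp)⟩
  have hqL : q eL = true := by
    simp only [hq, decide_eq_true_eq]
    exact hlast eL (by rw [heL]; rfl)
  have key := alt_countP p.edges q hchainb hheadb
  rw [heL] at key
  simp only [Option.elim_some, hqL, if_true] at key
  have hcongr : p.edges.countP (fun a => ! q a) = p.edges.countP q' := by
    refine List.countP_congr ?_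
    intro e he
    simp only [hq, hq', Bool.not_eq_true', decide_eq_false_iff_not, decide_eq_true_eq]
    rcases hmem e he with ⟨h1, h2⟩ | ⟨h1, h2⟩
    · constructor
      · intro h; exact absurd h1 h
      · intro h; exact absurd h (fun _ => h2 h)
    · constructor
      · intro _; exact h2
      · intro _; exact h1
  have hCcard : C.ncard = p.edges.countP q := by
    have hCeq : C = {a | a ∈ p.edges.filter q} := by
      ext e
      simp [hC, hq, List.mem_filter]
    rw [hCeq, ← List.coe_toFinset, Set.ncard_coe_finset,
      List.toFinset_card_of_nodup (hnodup.filter _), ← List.countP_eq_length_filter]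
  have hBcard : B.ncard = p.edges.countP q' := by
    have hBeq : B = {a | a ∈ p.edges.filter q'} := by
      ext e
      simp [hB, hq', List.mem_filter]
    rw [hBeq, ← List.coe_toFinset, Set.ncard_coe_finset,
      List.toFinset_card_of_nodup (hnodup.filter _), ← List.countP_eq_length_filter]
  have hle : B.ncard ≤ A.ncard := Set.ncard_le_ncard hBA (Set.toFinite _)
  have hNcard : N.edgeSet.ncard = A.ncard + 1 := by
    rw [hNedge, Set.ncard_union_eq hdisj (Set.toFinite _) (Set.toFinite _),
      Set.ncard_diff hBA (Set.toFinite _)]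
    omega
  have := hmax N hNmatch
  rw [hNcard] at this
  omega

private lemma engine [Fintype V] {G : SimpleGraph V} {M M' : G.Subgraph}
    (hM : M.IsMatching) (hM' : M'.IsMatching)
    (hmax : ∀ N : G.Subgraph, N.IsMatching → N.edgeSet.ncard ≤ M'.edgeSet.ncard)
    {x : V} (hx : x ∉ M'.verts) :
    ∀ (k : ℕ) {y : V} (p : G.Walk x y),
      Fintype.card V < k + p.support.length →
      p.IsPath → ¬ p.Nil →
      List.Chain' (fun e f => e ∈ M.edgeSet ↔ f ∉ M.edgeSet) p.edges →
      (∀ e ∈ p.edges, (e ∈ M.edgeSet ∧ e ∉ M'.edgeSet) ∨ (e ∉ M.edgeSet ∧ e ∈ M'.edgeSet)) →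
      (∀ e ∈ p.edges.head?, e ∈ M.edgeSet) →
      (∃ w, p.edges.getLast? = some s(w, y) ∧ s(w, y) ∈ p.edges ∧ s(w, y) ∈ M.edgeSet) →
      (∀ e ∈ p.edges, e ∈ M'.edgeSet → y ∉ e) →
      ∃ (z : V) (q : G.Walk x z), q.IsPath ∧
        List.Chain' (fun e f => e ∈ M.edgeSet ↔ f ∉ M.edgeSet) q.edges ∧
        (∀ e ∈ q.edges.head?, e ∈ M.edgeSet) ∧ z ∉ M.verts := by
  intro k
  induction k with
  | zero =>
    intro y p hcard hpath _ _ _ _ _ _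
    have := (hpath.support_nodup).length_le_card
    omega
  | succ k ih =>
    intro y p hcard hpath hnil hchain hmem hhead hlastE hinvA
    obtain ⟨w, hgl, hglmem, hglM⟩ := hlastE
    have hlast : ∀ e ∈ p.edges.getLast?, e ∈ M.edgeSet := by
      intro e he
      rw [hgl] at he
      simp only [Option.mem_def, Option.some.injEq] at he
      subst he
      exact hglM
    by_cases hyM' : y ∈ M'.verts
    case neg => exact (no_augment hM hM' hmax p hpath hchain hmem hhead hlast hnil hx hyM').elim
    obtain ⟨z, hadj', -⟩ := hM' hyM'
    have hzy : z ≠ y := hadj'.adj_sub.ne'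
    have hzM'v : z ∈ M'.verts := hadj'.symm.fst_mem
    have hzsup : z ∉ p.support := by
      intro hzs
      have hzx : z ≠ x := fun h => hx (h ▸ hzM'v)
      obtain ⟨-, F3b⟩ := cover p.length p le_rfl hchain hmem hhead hlast hnil
      obtain ⟨f, hf, hzf, hfM'⟩ := F3b z hzs hzx hzy
      obtain ⟨c, rfl⟩ := Sym2.mem_iff_exists.mp hzf
      have h1 : M'.Adj z c := Subgraph.mem_edgeSet.mp hfM'
      have : c = y := (hM' h1.fst_mem).unique h1 hadj'.symm
      subst this
      exact hinvA _ hf hfM' (by simp)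
    have hyzM : s(y, z) ∉ M.edgeSet := by
      intro h
      have h1 : M.Adj y z := Subgraph.mem_edgeSet.mp h
      have h2 : M.Adj y w := (Subgraph.mem_edgeSet.mp hglM).symm
      have : z = w := (hM h1.fst_mem).unique h1 h2
      subst this
      exact hzsup (p.fst_mem_support_of_mem_edges hglmem)
    have hyzM' : s(y, z) ∈ M'.edgeSet := Subgraph.mem_edgeSet.mpr hadj'
    have hGyz : G.Adj y z := hadj'.adj_sub
    set p' := p.concat hGyz with hp'
    have hp'edges : p'.edges = p.edges ++ [s(y, z)] := by
      rw [hp', Walk.edges_concat, List.concat_eq_append]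
    have hp'support : p'.support = p.support ++ [z] := by
      rw [hp', Walk.support_concat]
    have hp'path : p'.IsPath := by
      have hnd := hpath.support_nodup
      rw [Walk.isPath_def, hp'support]
      simp only [List.nodup_append, List.nodup_cons, List.not_mem_nil, not_false_iff,
        List.nodup_nil, and_true, List.disjoint_singleton, true_and]
      exact ⟨hnd, fun a ha b hb hab => hzsup (by
        simp only [List.mem_singleton] at hb; subst hb; subst hab; exact ha)⟩
    have hpne : p.edges ≠ [] := by
      intro hcon
      exact hnil (Walk.nil_iff_length_eq.mpr (by rw [← Walk.length_edges, hcon]; rfl))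
    obtain ⟨e0, rest, he0⟩ := List.exists_cons_of_ne_nil hpne
    have hp'head : ∀ e ∈ p'.edges.head?, e ∈ M.edgeSet := by
      intro e he
      rw [hp'edges, he0] at he
      simp only [List.cons_append, head?_cons, Option.mem_def, Option.some.injEq] at he
      subst he
      exact hhead e0 (by rw [he0]; rfl)
    have hp'chain : List.Chain' (fun e f => e ∈ M.edgeSet ↔ f ∉ M.edgeSet) p'.edges := by
      rw [hp'edges]
      refine hchain.append (List.isChain_singleton _) ?_
      intro e he f hf
      rw [hgl] at he
      simp only [Option.mem_def, Option.some.injEq] at he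
      simp only [head?_cons, Option.mem_def, Option.some.injEq] at hf
      subst he
      subst hf
      exact ⟨fun _ => hyzM, fun _ => hglM⟩
    have hp'mem : ∀ e ∈ p'.edges,
        (e ∈ M.edgeSet ∧ e ∉ M'.edgeSet) ∨ (e ∉ M.edgeSet ∧ e ∈ M'.edgeSet) := by
      intro e he
      rw [hp'edges] at he
      rcases List.mem_append.mp he with he | he
      · exact hmem e he
      · simp only [List.mem_singleton] at he
        subst he
        exact Or.inr ⟨hyzM, hyzM'⟩
    by_cases hzM : z ∈ M.verts
    case neg => exact ⟨z, p', hp'path, hp'chain, hp'head, hzM⟩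
    obtain ⟨w', hw'adj, -⟩ := hM hzM
    have hw'z : w' ≠ z := hw'adj.adj_sub.ne'
    have hw'sup : w' ∉ p'.support := by
      intro hws
      rw [hp'support] at hws
      rcases List.mem_append.mp hws with hws | hws
      · obtain ⟨F3a, -⟩ := cover p.length p le_rfl hchain hmem hhead hlast hnil
        obtain ⟨e, he, hwe, heM⟩ := F3a w' hws
        obtain ⟨c, rfl⟩ := Sym2.mem_iff_exists.mp hwe
        have h1 : M.Adj w' c := Subgraph.mem_edgeSet.mp heM
        have : c = z := (hM h1.fst_mem).unique h1 hw'adj.symm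
        subst this
        exact hzsup (p.snd_mem_support_of_mem_edges he)
      · simp only [List.mem_singleton] at hws
        exact hw'z hws
    have hzw'M : s(z, w') ∈ M.edgeSet := Subgraph.mem_edgeSet.mpr hw'adj
    have hzw'M' : s(z, w') ∉ M'.edgeSet := by
      intro h
      have h1 : M'.Adj z w' := Subgraph.mem_edgeSet.mp h
      have : w' = y := (hM' h1.fst_mem).unique h1 hadj'.symm
      subst this
      exact hw'sup (by rw [hp'support]; exact List.mem_append_left _ p.end_mem_support)
    have hGzw' : G.Adj z w' := hw'adj.adj_sub
    set p'' := p'.concat hGzw' with hp''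
    have hp''edges : p''.edges = p'.edges ++ [s(z, w')] := by
      rw [hp'', Walk.edges_concat, List.concat_eq_append]
    have hp''support : p''.support = p'.support ++ [w'] := by
      rw [hp'', Walk.support_concat]
    have hp''path : p''.IsPath := by
      have hnd := hp'path.support_nodup
      rw [Walk.isPath_def, hp''support]
      simp only [List.nodup_append, List.nodup_cons, List.not_mem_nil, not_false_iff,
        List.nodup_nil, and_true, List.disjoint_singleton, true_and]
      exact ⟨hnd, fun a ha b hb hab => hw'sup (by
        simp only [List.mem_singleton] at hb; subst hb; subst hab; exact ha)⟩
    refine ih p'' ?_ hp''path ?_ ?_ ?_ ?_ ?_ ?_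
    · rw [hp''support, hp'support]
      simp only [List.length_append, List.length_singleton]
      omega
    · intro hcon
      have := Walk.nil_iff_length_eq.mp hcon
      rw [hp''] at this
      simp [Walk.length_concat] at this
    · rw [hp''edges]
      refine hp'chain.append (List.isChain_singleton _) ?_
      intro e he f hf
      rw [hp'edges, List.getLast?_concat] at he
      simp only [Option.mem_def, Option.some.injEq] at he
      simp only [head?_cons, Option.mem_def, Option.some.injEq] at hf
      subst he
      subst hf
      exact ⟨fun h => absurd h hyzM, fun h => absurd hzw'M h⟩
    · intro e he
      rw [hp''edges] at he
      rcases List.mem_append.mp he with he | he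
      · exact hp'mem e he
      · simp only [List.mem_singleton] at he
        subst he
        exact Or.inl ⟨hzw'M, hzw'M'⟩
    · intro e he
      rw [hp''edges, hp'edges, he0] at he
      simp only [List.cons_append, head?_cons, Option.mem_def, Option.some.injEq] at he
      subst he
      exact hhead e0 (by rw [he0]; rfl)
    · refine ⟨z, ?_, ?_, hzw'M⟩
      · rw [hp''edges, List.getLast?_concat]
      · rw [hp''edges]
        exact List.mem_append_right _ (by simp)
    · intro e he heM' hwe
      rw [hp''edges] at he
      rcases List.mem_append.mp he with he | he
      · exact hw'sup (mem_support_of_mem_edges' he hwe)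
      · simp only [List.mem_singleton] at he
        subst he
        exact hzw'M' heM'

end AuxAltPath

/-- For a maximum matching `M` and `x ∈ D(G)`: either `x` is `M`-unsaturated, or
there is an `M`-alternating path from `x` starting with a matched edge and
ending at an `M`-unsaturated vertex. -/
theorem stmt_6 {V : Type u} [Fintype V] (G : SimpleGraph V) (M : G.Subgraph)
    (hM : IsMaxMatching G M) (x : V) (hx : x ∈ DSet G) :
    x ∉ M.verts ∨
    ∃ (y : V) (p : G.Walk x y), p.IsPath ∧ Alternating G M p.edges ∧
      (∀ e ∈ p.edges.head?, e ∈ M.edgeSet) ∧ y ∉ M.verts := by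
  obtain ⟨M', ⟨hM'match, hM'max⟩, hxM'⟩ := hx
  by_cases hxM : x ∈ M.verts
  · right
    obtain ⟨z0, hz0, -⟩ := hM.1 hxM
    have hGxz : G.Adj x z0 := hz0.adj_sub
    have hxz0 : x ≠ z0 := hGxz.ne
    set p0 : G.Walk x z0 := Walk.cons hGxz Walk.nil with hp0
    have hedges : p0.edges = [s(x, z0)] := rfl
    have hxz0M : s(x, z0) ∈ M.edgeSet := Subgraph.mem_edgeSet.mpr hz0
    have hxz0M' : s(x, z0) ∉ M'.edgeSet := fun h => hxM' (Subgraph.mem_edgeSet.mp h).fst_mem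
    obtain ⟨z, q, hqpath, hqchain, hqhead, hqz⟩ :=
      engine hM.1 hM'match hM'max hxM' (Fintype.card V) p0
      (by have : p0.support.length = 2 := rfl
          omega)
      (by rw [Walk.isPath_def]; simp [hp0, hxz0])
      (by rw [Walk.nil_iff_length_eq]; simp [hp0])
      (by rw [hedges]; exact List.isChain_singleton _)
      (by intro e he; rw [hedges] at he; simp only [List.mem_singleton] at he; subst he
          exact Or.inl ⟨hxz0M, hxz0M'⟩)
      (by intro e he; rw [hedges] at he
          simp only [List.head?_cons, Option.mem_def, Option.some.injEq] at he
          subst he; exact hxz0M)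
      ⟨x, by simp [hedges], by simp [hedges], hxz0M⟩
      (by intro e he heM'; rw [hedges] at he; simp only [List.mem_singleton] at he; subst he
          exact absurd heM' hxz0M')
    exact ⟨z, q, hqpath, hqchain, hqhead, hqz⟩
  · exact Or.inl hxM
end

section
/- If G is an R-disjoint graph, then corona(G) ∪ N(core(G)) = V(G), i.e., every vertex of G either lies in some maximum independent set or is adjacent to a vertex lying in all maximum independent sets. -/
open SimpleGraph

universe u

variable {V : Type u}

section CoronaAux
set_option linter.unusedSectionVars false

open SimpleGraph Walk

variable {V : Type u} [Fintype V] {G : SimpleGraph V}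

lemma indep_empty (G : SimpleGraph V) : IsIndep G (∅ : Set V) :=
  fun u hu => absurd hu (Set.notMem_empty u)

lemma exists_maxIndep (G : SimpleGraph V) : ∃ S : Set V, IsMaxIndep G S := by
  classical
  set N : Set ℕ := {n | ∃ S : Set V, IsIndep G S ∧ S.ncard = n} with hN
  have hne : N.Nonempty := ⟨0, ∅, indep_empty G, by simp⟩
  have hbdd : BddAbove N := by
    refine ⟨Fintype.card V, fun n hn => ?_⟩
    obtain ⟨S, _, rfl⟩ := hn
    calc S.ncard ≤ (Set.univ : Set V).ncard := Set.ncard_le_ncard (Set.subset_univ S)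
      _ = Fintype.card V := by rw [Set.ncard_univ, Nat.card_eq_fintype_card]
  obtain ⟨S, hSind, hScard⟩ := Nat.sSup_mem hne hbdd
  exact ⟨S, hSind, fun T hT => by
    have : T.ncard ∈ N := ⟨T, hT, rfl⟩
    calc T.ncard ≤ sSup N := le_csSup hbdd this
      _ = S.ncard := hScard.symm⟩

lemma mis_not_mem {v : V} (hv : v ∉ corona G) {S : Set V} (hS : IsMaxIndep G S) : v ∉ S :=
  fun hmem => hv (Set.mem_sUnion.mpr ⟨S, hS, hmem⟩)

lemma two_nbrs {v : V} (hv : v ∉ corona G) {S : Set V} (hS : IsMaxIndep G S) :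
    ∃ u1 u2, u1 ≠ u2 ∧ u1 ∈ S ∧ u2 ∈ S ∧ G.Adj v u1 ∧ G.Adj v u2 := by
  classical
  set A : Set V := {y | G.Adj v y} with hA
  have hvS : v ∉ S := mis_not_mem hv hS
  have hfin : (A ∩ S).Finite := Set.toFinite _
  have h1 : (A ∩ S).Nonempty := by
    by_contra hemp
    have hemp' : A ∩ S = ∅ := Set.not_nonempty_iff_eq_empty.mp hemp
    have hT : IsIndep G (insert v S) := by
      intro a ha b hb hadj
      rcases ha with rfl | ha
      · rcases hb with rfl | hb
        · exact G.loopless.irrefl _ hadj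
        · exact Set.eq_empty_iff_forall_notMem.mp hemp' b ⟨hadj, hb⟩
      · rcases hb with rfl | hb
        · exact Set.eq_empty_iff_forall_notMem.mp hemp' a ⟨hadj.symm, ha⟩
        · exact hS.1 ha hb hadj
    have hcard : (insert v S).ncard = S.ncard + 1 := Set.ncard_insert_of_notMem hvS
    have := hS.2 (insert v S) hT
    omega
  have h2 : ¬∃ w, A ∩ S = {w} := by
    rintro ⟨w, hw⟩
    have hwAS : w ∈ A ∩ S := by rw [hw]; exact Set.mem_singleton w
    have hwS : w ∈ S := hwAS.2
    have hvSd : v ∉ S \ {w} := fun hc => hvS hc.1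
    have hT : IsIndep G (insert v (S \ {w})) := by
      intro a ha b hb hadj
      rcases ha with rfl | ha
      · rcases hb with rfl | hb
        · exact G.loopless.irrefl _ hadj
        · have : b ∈ A ∩ S := ⟨hadj, hb.1⟩
          rw [hw] at this
          exact hb.2 this
      · rcases hb with rfl | hb
        · have : a ∈ A ∩ S := ⟨hadj.symm, ha.1⟩
          rw [hw] at this
          exact ha.2 this
        · exact hS.1 ha.1 hb.1 hadj
    have hc1 : (insert v (S \ {w})).ncard = (S \ {w}).ncard + 1 :=
      Set.ncard_insert_of_notMem hvSd
    have hc2 : (S \ {w}).ncard + 1 = S.ncard := Set.ncard_diff_singleton_add_one hwS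
    have hmis : IsMaxIndep G (insert v (S \ {w})) := by
      refine ⟨hT, fun T' hT' => ?_⟩
      have := hS.2 T' hT'
      omega
    exact hv (Set.mem_sUnion.mpr ⟨_, hmis, Set.mem_insert v _⟩)
  have hgt : 1 < (A ∩ S).ncard := by
    have hpos : 0 < (A ∩ S).ncard := (Set.ncard_pos hfin).mpr h1
    by_contra hle
    push_neg at hle
    have h1' : (A ∩ S).ncard = 1 := by omega
    exact h2 (Set.ncard_eq_one.mp h1')
  obtain ⟨u1, u2, hu1, hu2, hne⟩ := (Set.one_lt_ncard_iff hfin).mp hgt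
  exact ⟨u1, u2, hne, hu1.2, hu2.2, hu1.1, hu2.1⟩

lemma exists_witness {u : V} (hu : u ∉ core G) : ∃ S : Set V, IsMaxIndep G S ∧ u ∉ S := by
  by_contra hc
  push_neg at hc
  exact hu (Set.mem_sInter.mpr fun S hS => hc S hS)

lemma walk_parity {S S' : Set V} (hS : IsIndep G S) (hS' : IsIndep G S')
    {x y : V} (w : G.Walk x y) (hw : ∀ z ∈ w.support, z ∈ (S \ S') ∪ (S' \ S)) :
    ((x ∈ S) ↔ (y ∈ S)) ↔ Even w.length := by
  induction w with
  | nil => simp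
  | @cons a b c hadj p ih =>
    have hD_a : a ∈ (S \ S') ∪ (S' \ S) := hw a (by simp)
    have hp : ∀ z ∈ p.support, z ∈ (S \ S') ∪ (S' \ S) := fun z hz =>
      hw z (by rw [Walk.support_cons]; exact List.mem_cons_of_mem _ hz)
    have hD_b : b ∈ (S \ S') ∪ (S' \ S) := hp b p.start_mem_support
    have hstep : (a ∈ S) ↔ ¬(b ∈ S) := by
      constructor
      · intro haS hbS
        exact hS haS hbS hadj
      · intro hbS
        rcases hD_a with h | h
        · exact h.1
        · rcases hD_b with h' | h'
          · exact absurd h'.1 hbS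
          · exact absurd hadj (hS' h.1 h'.1)
    have hIH := ih hp
    rw [Walk.length_cons, Nat.even_add_one, ← hIH]
    tauto

lemma build_cycle {v a b : V} (h1 : G.Adj v a) (h2 : G.Adj b v) (P : G.Walk a b)
    (hP : P.IsPath) (hv : v ∉ P.support) (hab : a ≠ b) :
    ∃ w : G.Walk v v, w.IsCycle ∧ w.length = P.length + 2 ∧
      ∀ z, z ∈ w.support ↔ (z = v ∨ z ∈ P.support) := by
  refine ⟨Walk.cons h1 (P.concat h2), ?_, ?_, ?_⟩
  · rw [Walk.isCycle_def]
    refine ⟨?_, by simp, ?_⟩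
    · rw [Walk.isTrail_def, Walk.edges_cons, Walk.edges_concat]
      have hPe : P.edges.Nodup := hP.isTrail.edges_nodup
      have hbv : s(b, v) ∉ P.edges := fun hc => hv (Walk.snd_mem_support_of_mem_edges P hc)
      have hva : s(v, a) ∉ P.edges := fun hc => hv (Walk.fst_mem_support_of_mem_edges P hc)
      have hne' : s(v, a) ≠ s(b, v) := by
        intro hc
        rw [Sym2.eq_iff] at hc
        rcases hc with ⟨_, h2'⟩ | ⟨_, h2'⟩
        · exact h1.ne h2'.symm
        · exact hab h2'
      rw [List.concat_eq_append, List.nodup_cons, List.nodup_append']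
      refine ⟨?_, hPe, by simp, ?_⟩
      · rw [List.mem_append]
        rintro (hc | hc)
        · exact hva hc
        · rw [List.mem_singleton] at hc; exact hne' hc
      · intro e he
        simp only [List.mem_singleton]
        intro hc; rw [hc] at he; exact hbv he
    · rw [Walk.support_cons, Walk.support_concat]
      simp only [List.tail_cons]
      rw [List.nodup_append']
      exact ⟨hP.support_nodup, by simp, by intro z hz; simp; intro hc; rw [hc] at hz; exact hv hz⟩
  · rw [Walk.length_cons, Walk.length_concat]
  · intro z
    rw [Walk.support_cons, Walk.support_concat]
    simp only [List.mem_cons, List.mem_append, List.mem_singleton]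
    tauto

end CoronaAux

/-- In an `R`-disjoint graph, `corona(G) ∪ N(core(G)) = V(G)`. -/
theorem stmt_12 {V : Type u} [Fintype V] (G : SimpleGraph V) (h : RDisjoint G) :
    corona G ∪ NSet G (core G) = Set.univ := by
  classical
  rw [Set.eq_univ_iff_forall]
  by_contra hall
  push_neg at hall
  obtain ⟨v, hv⟩ := hall
  have hvcor : v ∉ corona G := fun hc => hv (Or.inl hc)
  have hvN : v ∉ NSet G (core G) := fun hc => hv (Or.inr hc)
  -- distinct odd cycles cannot share a vertex
  have hdisj : ∀ C C' : Set V, IsOddCycle G C → IsOddCycle G C' → C ≠ C' →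
      ∀ z, z ∈ C → z ∈ C' → False := by
    have hsub : ∀ C : Set V, IsOddCycle G C → C ⊆ reach G C := by
      intro C hC c hc
      obtain ⟨z, hz⟩ := h.2.1 C hC
      obtain ⟨F, hF, _⟩ := hz
      obtain ⟨M, hM, hFl⟩ := hF
      refine Set.mem_sUnion.mpr ⟨F, ⟨M, hM, hFl⟩, ?_⟩
      obtain ⟨b, r, w, p, _, _, hsupp, _, rfl⟩ := hFl
      exact Or.inl ((hsupp c).mpr hc)
    intro C C' hC hC' hne z hz hz'
    have hint := h.2.2 C C' hC hC' hne
    have : z ∈ reach G C ∩ reach G C' := ⟨hsub C hC hz, hsub C' hC' hz'⟩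
    rw [hint] at this
    exact this
  -- witnesses: every neighbour of v is avoided by some MIS
  have hwit : ∀ u, G.Adj v u → ∃ S : Set V, IsMaxIndep G S ∧ u ∉ S := by
    intro u hu
    apply exists_witness
    intro hucore
    exact hvN ⟨u, hucore, hu.symm⟩
  set A : Set V := {y | G.Adj v y} with hA
  -- choose an MIS minimizing |A ∩ S|
  obtain ⟨S0, hS0⟩ := exists_maxIndep G
  have hNe : {k | ∃ T : Set V, IsMaxIndep G T ∧ (A ∩ T).ncard = k}.Nonempty := ⟨_, S0, hS0, rfl⟩
  obtain ⟨S, hS, hScard⟩ := Nat.sInf_mem hNe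
  have hmin : ∀ T : Set V, IsMaxIndep G T → (A ∩ S).ncard ≤ (A ∩ T).ncard := by
    intro T hT
    rw [hScard]
    exact Nat.sInf_le ⟨T, hT, rfl⟩
  have hvS : v ∉ S := mis_not_mem hvcor hS
  obtain ⟨u1, u2, hu12, hu1S, hu2S, hadj1, hadj2⟩ := two_nbrs hvcor hS
  -- the core construction: an odd path from u to a vertex x ∉ S with x ~ v
  have build : ∀ u, u ∈ S → G.Adj v u →
      ∃ x, x ∉ S ∧ G.Adj v x ∧ ∃ P : G.Walk u x, P.IsPath ∧ v ∉ P.support ∧ Odd P.length := by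
    intro u huS hadjU
    obtain ⟨S', hS', huS'⟩ := hwit u hadjU
    set D : Set V := (S \ S') ∪ (S' \ S) with hD
    set K : Set V := {y | ∃ w : G.Walk u y, ∀ z ∈ w.support, z ∈ D} with hK
    have huD : u ∈ D := Or.inl ⟨huS, huS'⟩
    have huK : u ∈ K := by
      refine ⟨Walk.nil, ?_⟩
      intro z hz
      rw [Walk.support_nil, List.mem_singleton] at hz
      rw [hz]; exact huD
    have hKD : ∀ y, y ∈ K → y ∈ D := by
      rintro y ⟨w, hw⟩
      exact hw y w.end_mem_support
    have hclose : ∀ y, y ∈ K → ∀ z, G.Adj y z → z ∈ D → z ∈ K := by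
      rintro y ⟨w, hw⟩ z hadj hzD
      refine ⟨w.concat hadj, ?_⟩
      intro t ht
      rw [Walk.support_concat, List.mem_append,
        List.mem_singleton] at ht
      rcases ht with ht | rfl
      · exact hw t ht
      · exact hzD
    -- the two swap sets
    have hT1ind : IsIndep G ((S \ K) ∪ (S' ∩ K)) := by
      intro p hp q hq hadj
      rcases hp with hp | hp <;> rcases hq with hq | hq
      · exact hS.1 hp.1 hq.1 hadj
      · by_cases hpS' : p ∈ S'
        · exact hS'.1 hpS' hq.1 hadj
        · exact hp.2 (hclose q hq.2 p hadj.symm (Or.inl ⟨hp.1, hpS'⟩))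
      · by_cases hqS' : q ∈ S'
        · exact hS'.1 hp.1 hqS' hadj
        · exact hq.2 (hclose p hp.2 q hadj (Or.inl ⟨hq.1, hqS'⟩))
      · exact hS'.1 hp.1 hq.1 hadj
    have hT2ind : IsIndep G ((S' \ K) ∪ (S ∩ K)) := by
      intro p hp q hq hadj
      rcases hp with hp | hp <;> rcases hq with hq | hq
      · exact hS'.1 hp.1 hq.1 hadj
      · by_cases hpS : p ∈ S
        · exact hS.1 hpS hq.1 hadj
        · exact hp.2 (hclose q hq.2 p hadj.symm (Or.inr ⟨hp.1, hpS⟩))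
      · by_cases hqS : q ∈ S
        · exact hS.1 hp.1 hqS hadj
        · exact hq.2 (hclose p hp.2 q hadj (Or.inr ⟨hq.1, hqS⟩))
      · exact hS.1 hp.1 hq.1 hadj
    have d1 : Disjoint (S \ K) (S' ∩ K) := Set.disjoint_left.mpr fun x hx hx' => hx.2 hx'.2
    have d2 : Disjoint (S' \ K) (S ∩ K) := Set.disjoint_left.mpr fun x hx hx' => hx.2 hx'.2
    have d3 : Disjoint (S \ K) (S ∩ K) := Set.disjoint_left.mpr fun x hx hx' => hx.2 hx'.2
    have d4 : Disjoint (S' \ K) (S' ∩ K) := Set.disjoint_left.mpr fun x hx hx' => hx.2 hx'.2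
    have cardS : (S \ K).ncard + (S ∩ K).ncard = S.ncard := by
      rw [← Set.ncard_union_eq d3, Set.diff_union_inter]
    have cardS' : (S' \ K).ncard + (S' ∩ K).ncard = S'.ncard := by
      rw [← Set.ncard_union_eq d4, Set.diff_union_inter]
    have cardT1 : ((S \ K) ∪ (S' ∩ K)).ncard = (S \ K).ncard + (S' ∩ K).ncard :=
      Set.ncard_union_eq d1
    have cardT2 : ((S' \ K) ∪ (S ∩ K)).ncard = (S' \ K).ncard + (S ∩ K).ncard :=
      Set.ncard_union_eq d2
    have le1 := hS.2 _ hT1ind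
    have le2 := hS'.2 _ hT2ind
    have hT1mis : IsMaxIndep G ((S \ K) ∪ (S' ∩ K)) := by
      refine ⟨hT1ind, fun W hW => ?_⟩
      have := hS.2 W hW
      omega
    have hm := hmin _ hT1mis
    have dA1 : Disjoint (A ∩ (S \ K)) (A ∩ (S ∩ K)) :=
      Set.disjoint_left.mpr fun x hx hx' => hx.2.2 hx'.2.2
    have dA2 : Disjoint (A ∩ (S \ K)) (A ∩ (S' ∩ K)) :=
      Set.disjoint_left.mpr fun x hx hx' => hx.2.2 hx'.2.2
    have cardAS : (A ∩ (S \ K)).ncard + (A ∩ (S ∩ K)).ncard = (A ∩ S).ncard := by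
      rw [← Set.ncard_union_eq dA1, ← Set.inter_union_distrib_left, Set.diff_union_inter]
    have cardAT1 : (A ∩ (S \ K)).ncard + (A ∩ (S' ∩ K)).ncard
        = (A ∩ ((S \ K) ∪ (S' ∩ K))).ncard := by
      rw [← Set.ncard_union_eq dA2, ← Set.inter_union_distrib_left]
    have hupos : 0 < (A ∩ (S ∩ K)).ncard :=
      (Set.ncard_pos (Set.toFinite _)).mpr ⟨u, hadjU, huS, huK⟩
    have hxne : (A ∩ (S' ∩ K)).Nonempty := by
      rw [← Set.ncard_pos (Set.toFinite _)]
      omega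
    obtain ⟨x, hxA, hxS', hxK⟩ := hxne
    have hxD : x ∈ D := hKD x hxK
    have hxnotS : x ∉ S := by
      rcases hxD with hd | hd
      · exact absurd hxS' hd.2
      · exact hd.2
    obtain ⟨w0, hw0⟩ := hxK
    refine ⟨x, hxnotS, hxA, w0.bypass, w0.bypass_isPath, ?_, ?_⟩
    · intro hc
      have hvD : v ∈ D := hw0 v (w0.support_bypass_subset hc)
      rcases hvD with hd | hd
      · exact hvS hd.1
      · exact mis_not_mem hvcor hS' hd.1
    · have hpar := walk_parity hS.1 hS'.1 w0.bypass
        (fun z hz => hw0 z (w0.support_bypass_subset hz))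
      rw [← Nat.not_even_iff_odd]
      intro he
      exact hxnotS ((hpar.mpr he).mp huS)
  obtain ⟨x1, hx1S, hadjx1, P1, hP1, hvP1, hoddP1⟩ := build u1 hu1S hadj1
  obtain ⟨x2, hx2S, hadjx2, P2, hP2, hvP2, hoddP2⟩ := build u2 hu2S hadj2
  have hu1x1 : u1 ≠ x1 := fun he => hx1S (he ▸ hu1S)
  have hu2x2 : u2 ≠ x2 := fun he => hx2S (he ▸ hu2S)
  have hu2x1 : u2 ≠ x1 := fun he => hx1S (he ▸ hu2S)
  obtain ⟨w1, hc1, hl1, hs1⟩ := build_cycle hadj1 hadjx1.symm P1 hP1 hvP1 hu1x1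
  obtain ⟨w2, hc2, hl2, hs2⟩ := build_cycle hadj2 hadjx2.symm P2 hP2 hvP2 hu2x2
  set C1 : Set V := {z | z = v ∨ z ∈ P1.support} with hC1
  set C2 : Set V := {z | z = v ∨ z ∈ P2.support} with hC2
  have hC1odd : IsOddCycle G C1 := by
    refine ⟨v, w1, hc1, ?_, fun z => hs1 z⟩
    rw [hl1]
    obtain ⟨k, hk⟩ := hoddP1
    exact ⟨k + 1, by omega⟩
  have hC2odd : IsOddCycle G C2 := by
    refine ⟨v, w2, hc2, ?_, fun z => hs2 z⟩
    rw [hl2]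
    obtain ⟨k, hk⟩ := hoddP2
    exact ⟨k + 1, by omega⟩
  by_cases hCC : C1 = C2
  · -- the two cycles coincide; split at the chord v-u2
    have hu2C1 : u2 ∈ C1 := by
      rw [hCC]
      exact Or.inr P2.start_mem_support
    have hu2P1 : u2 ∈ P1.support := by
      rcases hu2C1 with hc | hc
      · exact absurd hc.symm hadj2.ne
      · exact hc
    set t := P1.takeUntil u2 hu2P1 with ht
    set d := P1.dropUntil u2 hu2P1 with hd
    have htP : t.IsPath := hP1.takeUntil hu2P1
    have hdP : d.IsPath := hP1.dropUntil hu2P1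
    have hlen : t.length + d.length = P1.length := by
      have := congrArg Walk.length (P1.take_spec hu2P1)
      rwa [Walk.length_append] at this
    have hsupp_split : P1.support = t.support ++ d.support.tail := by
      have := congrArg Walk.support (P1.take_spec hu2P1)
      rw [Walk.support_append] at this
      exact this.symm
    have hnd2 : (t.support ++ d.support.tail).Nodup := by
      rw [← hsupp_split]
      exact hP1.support_nodup
    have hdisjTD : List.Disjoint t.support d.support.tail := (List.nodup_append'.mp hnd2).2.2
    have hx1tail : x1 ∈ d.support.tail := by
      have hx1d : x1 ∈ d.support := d.end_mem_support
      rw [d.support_eq_cons, List.mem_cons] at hx1d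
      rcases hx1d with hc | hc
      · exact absurd hc.symm hu2x1
      · exact hc
    have hvt : v ∉ t.support := fun hc => hvP1 (P1.support_takeUntil_subset hu2P1 hc)
    have hvd : v ∉ d.support := fun hc => hvP1 (P1.support_dropUntil_subset hu2P1 hc)
    rcases Nat.even_or_odd t.length with hte | hto
    · -- d has odd length: use the cycle v-u2-...-x1-v
      have hdodd : Odd d.length := by
        rw [Nat.odd_iff] at hoddP1 ⊢
        rw [Nat.even_iff] at hte
        omega
      obtain ⟨wd, hcd, hld, hsd⟩ := build_cycle hadj2 hadjx1.symm d hdP hvd hu2x1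
      set Cd : Set V := {z | z = v ∨ z ∈ d.support} with hCd
      have hCdodd : IsOddCycle G Cd := by
        refine ⟨v, wd, hcd, ?_, fun z => hsd z⟩
        rw [hld]
        obtain ⟨k, hk⟩ := hdodd
        exact ⟨k + 1, by omega⟩
      have hCdne : Cd ≠ C1 := by
        intro he
        have hu1Cd : u1 ∈ Cd := by
          rw [he]
          exact Or.inr P1.start_mem_support
        rcases hu1Cd with hc | hc
        · exact hadj1.ne hc.symm
        · rw [d.support_eq_cons, List.mem_cons] at hc
          rcases hc with hc | hc
          · exact hu12 hc
          · exact hdisjTD t.start_mem_support hc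
      exact hdisj Cd C1 hCdodd hC1odd hCdne v (Or.inl rfl) (Or.inl rfl)
    · -- t has odd length: use the cycle v-u1-...-u2-v
      obtain ⟨wt, hct, hlt, hst⟩ := build_cycle hadj1 hadj2.symm t htP hvt hu12
      set Ct : Set V := {z | z = v ∨ z ∈ t.support} with hCt
      have hCtodd : IsOddCycle G Ct := by
        refine ⟨v, wt, hct, ?_, fun z => hst z⟩
        rw [hlt]
        obtain ⟨k, hk⟩ := hto
        exact ⟨k + 1, by omega⟩
      have hCtne : Ct ≠ C1 := by
        intro he
        have hx1Ct : x1 ∈ Ct := by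
          rw [he]
          exact Or.inr P1.end_mem_support
        rcases hx1Ct with hc | hc
        · exact hadjx1.ne hc.symm
        · exact hdisjTD hc hx1tail
      exact hdisj Ct C1 hCtodd hC1odd hCtne v (Or.inl rfl) (Or.inl rfl)
  · exact hdisj C1 C2 hC1odd hC2odd hCC v (Or.inl rfl) (Or.inl rfl)
end
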